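/- arXiv:math/0002175 — 4 statements merged into one kernel-verified Lean document; each statement's English description precedes it below -/
import Mathlib

section
/- Let T(·,·) be a C² function on the strip with values in [0,1], let I_j = [c_j−h_j, c_j+h_j] ⊂ [0,H], and fix x such that there exists y' ∈ I_j with T(x,y') ∈ [θ₁, θ₄]. Then there is a universal constant C > 0 (independent of T, f, and all the parameters) such that | κ ∫_{c_j−h_j}^{c_j+h_j} G(h_j, y−c_j) T_{yy}(x,y) dy | ≤ C f₀^{-1/2} ζ^{-1} (κ/(v₀ h_j)) [ (v₀²/κ) ∫_{c_j−h_j}^{c_j+h_j} f(T(x,y)) dy + κ ∫_{c_j−h_j}^{c_j+h_j} |∇T(x,y)|² dy ]. -/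
set_option autoImplicit false

open MeasureTheory Real Filter Set

noncomputable section

/-- the averaging kernel `G(h,ξ) = max(1 - |ξ|/h, 0)`. -/
def kerG (h ξ : ℝ) : ℝ := max (1 - |ξ| / h) 0

/-- partial derivative of a function of two variables in the first variable. -/
def qX (T : ℝ → ℝ → ℝ) (x y : ℝ) : ℝ := deriv (fun s => T s y) x
/-- partial derivative in the second variable. -/
def qY (T : ℝ → ℝ → ℝ) (x y : ℝ) : ℝ := deriv (fun s => T x s) y
/-- second partial derivative in the second variable. -/
def qYY (T : ℝ → ℝ → ℝ) (x y : ℝ) : ℝ := deriv (fun s => qY T x s) y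

lemma amgm_abs (d ζ q : ℝ) (hd : 0 < d) (hζ : 0 < ζ) :
    |q| ≤ ζ / (2 * d) + d / (2 * ζ) * q ^ 2 := by
  have h1 : 0 ≤ (d * |q| - ζ)^2 := sq_nonneg _
  have h2 : |q|^2 = q^2 := sq_abs q
  rw [div_mul_eq_mul_div, div_add_div _ _ (by positivity) (by positivity),
    le_div_iff₀ (by positivity)]
  have h3 : 0 ≤ d^2*q^2 - 2*d*ζ*|q| + ζ^2 := by nlinarith
  nlinarith [abs_nonneg q]

lemma exit_main (f g q : ℝ → ℝ) (θ1 θ4 ζ f0 h u : ℝ)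
    (hζ : 0 < ζ) (hf0 : 0 < f0) (hh : 0 < h)
    (hq : ∀ y, HasDerivAt g (q y) y) (hqc : Continuous q)
    (hfg : Continuous (fun y => f (g y)))
    (hfpos : ∀ θ ∈ Ioo (θ1 - ζ) (θ4 + ζ), f0 < f θ)
    (hfnn : ∀ y, 0 ≤ f (g y))
    (hgu : g u ∈ Icc θ1 θ4) :
    f0 * h ≤ (∫ y in u..(u+h), f (g y)) ∨
    ∃ d, 0 < d ∧ d ≤ h ∧ f0 * d ≤ (∫ y in u..(u+h), f (g y)) ∧
      ζ^2 / d ≤ ∫ y in u..(u+h), (q y)^2 := by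
  have hgc : Continuous g := continuous_iff_continuousAt.mpr fun y => (hq y).continuousAt
  set v := u + h with hv
  have huv : u ≤ v := by simp [hv]; linarith
  have hguIoo : g u ∈ Ioo (θ1 - ζ) (θ4 + ζ) := ⟨by linarith [hgu.1], by linarith [hgu.2]⟩
  by_cases hall : ∀ y ∈ Icc u v, g y ∈ Ioo (θ1 - ζ) (θ4 + ζ)
  · left
    calc f0 * h = ∫ _ in u..v, f0 := by
          rw [intervalIntegral.integral_const, smul_eq_mul, hv]; ring
      _ ≤ ∫ y in u..v, f (g y) := by
          apply intervalIntegral.integral_mono_on huv intervalIntegrable_const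
            (hfg.intervalIntegrable _ _)
          intro y hy
          exact (hfpos _ (hall y hy)).le
  · right
    push_neg at hall
    set S := {t | t ∈ Icc u v ∧ g t ∉ Ioo (θ1 - ζ) (θ4 + ζ)} with hS
    have hSne : S.Nonempty := by
      obtain ⟨y, hy1, hy2⟩ := hall; exact ⟨y, hy1, hy2⟩
    have hSclosed : IsClosed S := by
      have : S = Icc u v ∩ g ⁻¹' (Ioo (θ1 - ζ) (θ4 + ζ))ᶜ := by
        ext t; simp [hS, Set.mem_inter_iff]
      rw [this]
      exact isClosed_Icc.inter (isOpen_Ioo.isClosed_compl.preimage hgc)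
    have hSbdd : BddBelow S := ⟨u, fun t ht => ht.1.1⟩
    set dpt := sInf S with hdpt
    have hdptS : dpt ∈ S := hSclosed.csInf_mem hSne hSbdd
    have hudpt : u < dpt := by
      rcases lt_or_eq_of_le hdptS.1.1 with h' | h'
      · exact h'
      · exact absurd hguIoo (h' ▸ hdptS.2)
    have hdptv : dpt ≤ v := hdptS.1.2
    set d := dpt - u with hd
    have hd0 : 0 < d := by simp [hd]; linarith
    have hdh : d ≤ h := by simp [hd, hv] at hdptv ⊢; linarith
    have hgood : ∀ y ∈ Ico u dpt, g y ∈ Ioo (θ1 - ζ) (θ4 + ζ) := by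
      intro y hy
      by_contra hbad
      have : y ∈ S := ⟨⟨hy.1, by linarith [hy.2, hdptv]⟩, hbad⟩
      exact absurd (csInf_le hSbdd this) (not_le.mpr hy.2)
    -- f0 ≤ f (g y) on Icc u dpt (endpoint by continuity)
    have hfge : ∀ y ∈ Icc u dpt, f0 ≤ f (g y) := by
      intro y hy
      rcases lt_or_eq_of_le hy.2 with h' | h'
      · exact (hfpos _ (hgood y ⟨hy.1, h'⟩)).le
      · rw [h']
        have hcl : dpt ∈ closure (Ico u dpt) := by
          rw [closure_Ico (ne_of_lt hudpt)]; exact ⟨hudpt.le, le_refl _⟩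
        haveI hne : (nhdsWithin dpt (Ico u dpt)).NeBot :=
          mem_closure_iff_nhdsWithin_neBot.mp hcl
        have htd : Tendsto (fun t => f (g t)) (nhdsWithin dpt (Ico u dpt))
            (nhds (f (g dpt))) :=
          (hfg.continuousAt.continuousWithinAt (s := Ico u dpt)).tendsto
        refine ge_of_tendsto htd ?_
        filter_upwards [self_mem_nhdsWithin] with t ht
        exact (hfpos _ (hgood t ht)).le
    have hint1 : f0 * d ≤ ∫ y in u..dpt, f (g y) := by
      calc f0 * d = ∫ _ in u..dpt, f0 := by
            rw [intervalIntegral.integral_const, smul_eq_mul, hd]; ring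
        _ ≤ _ := intervalIntegral.integral_mono_on hudpt.le intervalIntegrable_const
            (hfg.intervalIntegrable _ _) hfge
    have hF : f0 * d ≤ ∫ y in u..v, f (g y) := by
      have hsplit : (∫ y in u..dpt, f (g y)) + ∫ y in dpt..v, f (g y) = ∫ y in u..v, f (g y) :=
        intervalIntegral.integral_add_adjacent_intervals (hfg.intervalIntegrable _ _)
          (hfg.intervalIntegrable _ _)
      have h2 : 0 ≤ ∫ y in dpt..v, f (g y) :=
        intervalIntegral.integral_nonneg hdptv (fun y _ => hfnn y)
      linarith
    -- gradient bound
    have hζle : ζ ≤ |g dpt - g u| := by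
      have h1 : θ1 ≤ g u := hgu.1
      have h2 : g u ≤ θ4 := hgu.2
      have := hdptS.2
      rw [Set.mem_Ioo, not_and_or, not_lt, not_lt] at this
      rcases this with h' | h'
      · rw [abs_sub_comm, abs_of_nonneg (by linarith)]; linarith
      · rw [abs_of_nonneg (by linarith)]; linarith
    have hftc : ∫ y in u..dpt, q y = g dpt - g u :=
      intervalIntegral.integral_eq_sub_of_hasDerivAt (fun y _ => hq y)
        (hqc.intervalIntegrable _ _)
    have habs : |∫ y in u..dpt, q y| ≤ ∫ y in u..dpt, |q y| :=
      intervalIntegral.abs_integral_le_integral_abs hudpt.le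
    have hptw : ∫ y in u..dpt, |q y| ≤ ζ/2 + d/(2*ζ) * ∫ y in u..dpt, (q y)^2 := by
      have := intervalIntegral.integral_mono_on hudpt.le
        (hqc.abs.intervalIntegrable (μ := volume) u dpt)
        ((intervalIntegrable_const (c := ζ/(2*d))).add
          (((hqc.pow 2).intervalIntegrable u dpt).const_mul (d/(2*ζ))))
        (fun y _ => amgm_abs d ζ (q y) hd0 hζ)
      rw [intervalIntegral.integral_add intervalIntegrable_const
        (((hqc.pow 2).intervalIntegrable u dpt).const_mul (d/(2*ζ))),
        intervalIntegral.integral_const, intervalIntegral.integral_const_mul] at this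
      have he : (dpt - u) • (ζ/(2*d)) = ζ/2 := by
        rw [smul_eq_mul, ← hd]; field_simp
      rw [he] at this
      exact this
    have hQsub : ζ^2 / d ≤ ∫ y in u..dpt, (q y)^2 := by
      have h3 : ζ ≤ ζ/2 + d/(2*ζ) * ∫ y in u..dpt, (q y)^2 := by
        calc ζ ≤ |g dpt - g u| := hζle
          _ = |∫ y in u..dpt, q y| := by rw [hftc]
          _ ≤ _ := habs.trans hptw
      rw [div_le_iff₀ hd0]
      have h4 : ζ/2 ≤ d/(2*ζ) * ∫ y in u..dpt, (q y)^2 := by linarith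
      rw [div_mul_eq_mul_div, le_div_iff₀ (by positivity)] at h4
      nlinarith
    have hQ : ζ^2 / d ≤ ∫ y in u..v, (q y)^2 := by
      have hsplit : (∫ y in u..dpt, (q y)^2) + ∫ y in dpt..v, (q y)^2 = ∫ y in u..v, (q y)^2 :=
        intervalIntegral.integral_add_adjacent_intervals ((hqc.pow 2).intervalIntegrable _ _)
          ((hqc.pow 2).intervalIntegrable _ _)
      have h2 : 0 ≤ ∫ y in dpt..v, (q y)^2 :=
        intervalIntegral.integral_nonneg hdptv (fun y _ => sq_nonneg _)
      linarith
    exact ⟨d, hd0, hdh, hF, hQ⟩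
lemma subint_le (φ : ℝ → ℝ) (hφ : Continuous φ) (hnn : ∀ y, 0 ≤ φ y)
    (a b A B : ℝ) (hab : a ≤ b) (h1 : A ≤ a) (h2 : b ≤ B) :
    (∫ y in a..b, φ y) ≤ ∫ y in Icc A B, φ y := by
  rw [intervalIntegral.integral_of_le hab, MeasureTheory.integral_Icc_eq_integral_Ioc]
  apply MeasureTheory.setIntegral_mono_set (hφ.integrableOn_Icc.mono_set Ioc_subset_Icc_self)
    (Filter.Eventually.of_forall hnn)
    (Filter.Eventually.of_forall (Ioc_subset_Ioc h1 h2))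

lemma caseA_arith (κ v0 h s Q : ℝ) (hκ : 0 < κ) (hv0 : 0 < v0) (hh : 0 < h)
    (hs : 0 < s) (hQ : 0 ≤ Q) :
    κ * ((1/h) * (v0*s/(2*κ) * h + (1/(2*(v0*s/(2*κ)))) * Q))
      ≤ (2 * s⁻¹ * (κ/(v0*h)) * ((v0^2/κ)*(s^2*h) + κ*Q)) * 2 := by
  have h1 : κ * ((1/h) * (v0*s/(2*κ) * h + (1/(2*(v0*s/(2*κ)))) * Q))
      = v0*s/2 + κ^2*Q/(v0*s*h) := by field_simp
  have h2 : (2 * s⁻¹ * (κ/(v0*h)) * ((v0^2/κ)*(s^2*h) + κ*Q)) * 2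
      = 4*(v0*s) + 4*(κ^2*Q/(v0*s*h)) := by field_simp; ring
  rw [h1, h2]
  have h3 : 0 ≤ κ^2*Q/(v0*s*h) := by positivity
  nlinarith [h3, mul_pos hv0 hs]

lemma caseB_arith (κ v0 s ζ d f0 : ℝ) (hκ : 0 < κ) (hv0 : 0 < v0) (hs : 0 < s)
    (hζ : 0 < ζ) (hd : 0 < d) (hs2 : s^2 = f0) :
    2*v0*s*ζ ≤ (v0^2/κ)*(f0*d) + κ*(ζ^2/d) := by
  rw [← hs2, div_mul_eq_mul_div, ← mul_div_assoc, div_add_div _ _ hκ.ne' hd.ne',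
    le_div_iff₀ (by positivity)]
  nlinarith [sq_nonneg (v0*s*d - κ*ζ)]

/-- Lemma 2: the averaged second derivative `T_yy` is controlled
by the integrals of `f(T)` and `|∇T|²`, with a universal constant. -/
theorem averaged_Tyy_bound :
    ∃ C > 0, ∀ (κ v0 H θ1 θ4 f0 ζ c h x : ℝ) (f : ℝ → ℝ) (T : ℝ → ℝ → ℝ),
      0 < κ → 0 < v0 → 0 < H → 0 < h →
      0 < θ1 → θ1 < θ4 → θ4 < 1 → 0 < f0 → 0 < ζ → ζ ≤ 1 / 2 →
      -- the nonlinearity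
      ContDiffOn ℝ 1 f (Icc 0 1) →
      f 0 = 0 → f 1 = 0 →
      (∀ s ∈ Icc (0 : ℝ) 1, 0 ≤ f s) →
      (∀ θ ∈ Ioo (θ1 - ζ) (θ4 + ζ), f0 < f θ) →
      -- the function T
      ContDiff ℝ 2 (fun p : ℝ × ℝ => T p.1 p.2) →
      (∀ x' y' : ℝ, T x' y' ∈ Icc (0 : ℝ) 1) →
      -- the interval I_j ⊆ [0,H]
      Icc (c - h) (c + h) ⊆ Icc 0 H →
      -- at the fixed x there is y' ∈ I_j with T(x,y') ∈ [θ₁,θ₄]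
      (∃ y' ∈ Icc (c - h) (c + h), T x y' ∈ Icc θ1 θ4) →
      |κ * ∫ y in Icc (c - h) (c + h), kerG h (y - c) * qYY T x y| ≤
        C * (Real.sqrt f0)⁻¹ * ζ⁻¹ * (κ / (v0 * h)) *
          ((v0 ^ 2 / κ) * (∫ y in Icc (c - h) (c + h), f (T x y)) +
            κ * ∫ y in Icc (c - h) (c + h), (qX T x y ^ 2 + qY T x y ^ 2)) := by
  refine ⟨2, by norm_num, ?_⟩
  intro κ v0 H θ1 θ4 f0 ζ c h x f T hκ hv0 hH hh hθ1 hθ14 hθ4 hf0 hζ hζ2 hf hf00 hf11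
    hfnn hfpos hT hTrange hIj hex
  -- basic setup
  set g : ℝ → ℝ := fun y => T x y with hgdef
  have hgC2 : ContDiff ℝ 2 g := hT.comp (contDiff_const.prodMk contDiff_id)
  have hgC2' : Differentiable ℝ g ∧ ((1 : WithTop ℕ∞) = ⊤ → AnalyticOn ℝ g Set.univ) ∧
      ContDiff ℝ 1 (deriv g) := by
    rw [← contDiff_succ_iff_deriv]; exact_mod_cast hgC2
  have hqdef : qY T x = deriv g := rfl
  have hqC1 : ContDiff ℝ 1 (qY T x) := hqdef ▸ hgC2'.2.2
  have hq : ∀ y, HasDerivAt g (qY T x y) y := fun y => (hgC2'.1 y).hasDerivAt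
  have hqC1' : Differentiable ℝ (qY T x) ∧ ((0 : WithTop ℕ∞) = ⊤ → AnalyticOn ℝ (qY T x) Set.univ) ∧
      ContDiff ℝ 0 (deriv (qY T x)) := by
    rw [← contDiff_succ_iff_deriv]; exact_mod_cast hqC1
  have hqyydef : qYY T x = deriv (qY T x) := rfl
  have hq' : ∀ y, HasDerivAt (qY T x) (qYY T x y) y := fun y => (hqC1'.1 y).hasDerivAt
  have hqc : Continuous (qY T x) := hqC1.continuous
  have hqyyc : Continuous (qYY T x) := hqyydef ▸ (contDiff_zero.mp hqC1'.2.2)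
  have hgc : Continuous g := hgC2.continuous
  have hfgc : Continuous (fun y => f (g y)) :=
    hf.continuousOn.comp_continuous hgc (fun y => hTrange x y)
  -- continuity of y ↦ qX T x y
  have hqxc : Continuous (fun y => qX T x y) := by
    have hTd : Differentiable ℝ (fun p : ℝ × ℝ => T p.1 p.2) := hT.differentiable (by norm_num)
    have hfd : Continuous (fun y : ℝ => fderiv ℝ (fun p : ℝ × ℝ => T p.1 p.2) (x, y)) :=
      (hT.continuous_fderiv (by norm_num)).comp (Continuous.prodMk_right x)
    have heq : ∀ y : ℝ, qX T x y =
        (fderiv ℝ (fun p : ℝ × ℝ => T p.1 p.2) (x, y)) (1, 0) := by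
      intro y
      have hd : HasDerivAt (fun s => T s y)
          ((fderiv ℝ (fun p : ℝ × ℝ => T p.1 p.2) (x, y)) (1, 0)) x := by
        have h1 : HasDerivAt (fun s : ℝ => (s, y)) ((1 : ℝ), (0 : ℝ)) x :=
          HasDerivAt.prodMk (hasDerivAt_id x) (hasDerivAt_const x y)
        exact ((hTd (x, y)).hasFDerivAt.comp_hasDerivAt x h1)
      exact hd.deriv.symm ▸ rfl
    simp only [heq]
    exact hfd.clm_apply continuous_const
  -- abbreviations
  have hch : c - h ≤ c + h := by linarith
  have hIcc_Ioc : ∀ (φ : ℝ → ℝ), (∫ y in Icc (c-h) (c+h), φ y) = ∫ y in (c-h)..(c+h), φ y := by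
    intro φ
    rw [intervalIntegral.integral_of_le hch, MeasureTheory.integral_Icc_eq_integral_Ioc]
  have hkerc : Continuous (fun y => kerG h (y - c) * qYY T x y) := by
    refine Continuous.mul ?_ hqyyc
    exact (continuous_const.sub ((continuous_abs.comp
      (continuous_id.sub continuous_const)).div_const h)).max continuous_const
  -- left half identity
  have hL : ∫ y in (c-h)..c, kerG h (y - c) * qYY T x y
      = qY T x c - (1/h) * ∫ y in (c-h)..c, qY T x y := by
    have e1 : ∫ y in (c-h)..c, kerG h (y - c) * qYY T x y
        = ∫ y in (c-h)..c, ((1 + (y-c)/h) * qYY T x y) := by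
      apply intervalIntegral.integral_congr
      intro y hy
      rw [Set.uIcc_of_le (by linarith)] at hy
      have h1 : |y - c| = c - y := by rw [abs_of_nonpos (by linarith [hy.2])]; ring
      have h2 : (0:ℝ) ≤ 1 - |y-c|/h := by
        rw [h1, sub_nonneg, div_le_one hh]; linarith [hy.1]
      show kerG h (y - c) * qYY T x y = (1 + (y-c)/h) * qYY T x y
      have h3 : kerG h (y - c) = 1 - |y-c|/h := max_eq_left h2
      rw [h3, h1]
      ring
    have e2 : ∀ y : ℝ, HasDerivAt (fun t => (1 + (t-c)/h) * qY T x t)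
        ((1/h) * qY T x y + (1 + (y-c)/h) * qYY T x y) y := by
      intro y
      have h1 : HasDerivAt (fun t : ℝ => 1 + (t-c)/h) (1/h) y := by
        simpa using (((hasDerivAt_id y).sub_const c).div_const h).const_add (1:ℝ)
      exact h1.mul (hq' y)
    have hcont1 : Continuous (fun y : ℝ => 1 + (y-c)/h) := by
      exact continuous_const.add ((continuous_id.sub continuous_const).div_const h)
    have e3 := intervalIntegral.integral_eq_sub_of_hasDerivAt
        (f := fun t => (1 + (t-c)/h) * qY T x t)
        (f' := fun y => (1/h) * qY T x y + (1 + (y-c)/h) * qYY T x y)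
        (a := c-h) (b := c) (fun y _ => e2 y)
        (((continuous_const.mul hqc : Continuous fun y => (1/h) * qY T x y).add (hcont1.mul hqyyc)).intervalIntegrable _ _)
    rw [intervalIntegral.integral_add (f := fun y => (1/h) * qY T x y) (g := fun y => (1 + (y-c)/h) * qYY T x y) ((continuous_const.mul hqc : Continuous fun y => (1/h) * qY T x y).intervalIntegrable _ _)
        ((hcont1.mul hqyyc).intervalIntegrable _ _),
      intervalIntegral.integral_const_mul] at e3
    have v3 : (fun t => (1 + (t-c)/h) * qY T x t) c = qY T x c := by
      show (1 + (c-c)/h) * qY T x c = qY T x c; simp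
    have v4 : (fun t => (1 + (t-c)/h) * qY T x t) (c-h) = 0 := by
      show (1 + ((c-h)-c)/h) * qY T x (c-h) = 0
      have : ((c-h)-c)/h = -1 := by field_simp; ring
      rw [this]; ring
    simp only at v3 v4
    rw [v3, v4, sub_zero] at e3
    rw [e1]; linarith
  -- right half identity
  have hR : ∫ y in c..(c+h), kerG h (y - c) * qYY T x y
      = -qY T x c + (1/h) * ∫ y in c..(c+h), qY T x y := by
    have e1 : ∫ y in c..(c+h), kerG h (y - c) * qYY T x y
        = ∫ y in c..(c+h), ((1 - (y-c)/h) * qYY T x y) := by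
      apply intervalIntegral.integral_congr
      intro y hy
      rw [Set.uIcc_of_le (by linarith)] at hy
      have h1 : |y - c| = y - c := abs_of_nonneg (by linarith [hy.1])
      have h2 : (0:ℝ) ≤ 1 - |y-c|/h := by
        rw [h1, sub_nonneg, div_le_one hh]; linarith [hy.2]
      show kerG h (y - c) * qYY T x y = (1 - (y-c)/h) * qYY T x y
      have h3 : kerG h (y - c) = 1 - |y-c|/h := max_eq_left h2
      rw [h3, h1]
    have e2 : ∀ y : ℝ, HasDerivAt (fun t => (1 - (t-c)/h) * qY T x t)
        (-(1/h) * qY T x y + (1 - (y-c)/h) * qYY T x y) y := by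
      intro y
      have h1 : HasDerivAt (fun t : ℝ => 1 - (t-c)/h) (-(1/h)) y := by
        simpa using (((hasDerivAt_id y).sub_const c).div_const h).const_sub (1:ℝ)
      exact h1.mul (hq' y)
    have hcont1 : Continuous (fun y : ℝ => 1 - (y-c)/h) := by
      exact continuous_const.sub ((continuous_id.sub continuous_const).div_const h)
    have e3 := intervalIntegral.integral_eq_sub_of_hasDerivAt
        (f := fun t => (1 - (t-c)/h) * qY T x t)
        (f' := fun y => -(1/h) * qY T x y + (1 - (y-c)/h) * qYY T x y)
        (a := c) (b := c+h) (fun y _ => e2 y)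
        (((continuous_const.mul hqc : Continuous fun y => (-(1/h)) * qY T x y).add (hcont1.mul hqyyc)).intervalIntegrable _ _)
    rw [intervalIntegral.integral_add (f := fun y => (-(1/h)) * qY T x y) (g := fun y => (1 - (y-c)/h) * qYY T x y) ((continuous_const.mul hqc : Continuous fun y => (-(1/h)) * qY T x y).intervalIntegrable _ _)
        ((hcont1.mul hqyyc).intervalIntegrable _ _),
      intervalIntegral.integral_const_mul] at e3
    have v3 : (fun t => (1 - (t-c)/h) * qY T x t) c = qY T x c := by
      show (1 - (c-c)/h) * qY T x c = qY T x c; simp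
    have v4 : (fun t => (1 - (t-c)/h) * qY T x t) (c+h) = 0 := by
      show (1 - ((c+h)-c)/h) * qY T x (c+h) = 0
      have : ((c+h)-c)/h = 1 := by field_simp; ring
      rw [this]; ring
    simp only at v3 v4
    rw [v3, v4, zero_sub] at e3
    rw [e1]; linarith
  have hJid : (∫ y in (c-h)..(c+h), kerG h (y-c) * qYY T x y)
      = (1/h) * ((∫ y in c..(c+h), qY T x y) - ∫ y in (c-h)..c, qY T x y) := by
    rw [← intervalIntegral.integral_add_adjacent_intervals
      (hkerc.intervalIntegrable (c-h) c) (hkerc.intervalIntegrable c (c+h)), hL, hR]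
    ring
  have hFTC : ∀ a' b' : ℝ, (∫ y in a'..b', qY T x y) = g b' - g a' := fun a' b' =>
    intervalIntegral.integral_eq_sub_of_hasDerivAt (fun y _ => hq y)
      (hqc.intervalIntegrable _ _)
  -- bound B1
  have hB1 : |∫ y in (c-h)..(c+h), kerG h (y-c) * qYY T x y| ≤ 2/h := by
    rw [hJid, hFTC, hFTC, abs_mul, abs_of_pos (by positivity : (0:ℝ) < 1/h)]
    have r1 := hTrange x (c+h)
    have r2 := hTrange x c
    have r3 := hTrange x (c-h)
    have habs : |g (c+h) - g c - (g c - g (c-h))| ≤ 2 := by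
      have e1 : g (c+h) = T x (c+h) := rfl
      have e2 : g c = T x c := rfl
      have e3 : g (c-h) = T x (c-h) := rfl
      rw [e1, e2, e3]
      rw [abs_le]
      constructor <;> [linarith [r1.1, r2.2, r3.1]; linarith [r1.2, r2.1, r3.2]]
    calc 1/h * |g (c+h) - g c - (g c - g (c-h))| ≤ 1/h * 2 := by
          exact mul_le_mul_of_nonneg_left habs (by positivity)
      _ = 2/h := by ring
  -- bound B2
  have hB2 : |∫ y in (c-h)..(c+h), kerG h (y-c) * qYY T x y|
      ≤ (1/h) * ∫ y in (c-h)..(c+h), |qY T x y| := by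
    rw [hJid, abs_mul, abs_of_pos (by positivity : (0:ℝ) < 1/h)]
    refine mul_le_mul_of_nonneg_left ?_ (by positivity)
    have h1 : |(∫ y in c..(c+h), qY T x y) - ∫ y in (c-h)..c, qY T x y|
        ≤ |∫ y in c..(c+h), qY T x y| + |∫ y in (c-h)..c, qY T x y| := abs_sub _ _
    have h2 : |∫ y in c..(c+h), qY T x y| ≤ ∫ y in c..(c+h), |qY T x y| :=
      intervalIntegral.abs_integral_le_integral_abs (by linarith)
    have h3 : |∫ y in (c-h)..c, qY T x y| ≤ ∫ y in (c-h)..c, |qY T x y| :=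
      intervalIntegral.abs_integral_le_integral_abs (by linarith)
    have h4 : (∫ y in (c-h)..c, |qY T x y|) + ∫ y in c..(c+h), |qY T x y|
        = ∫ y in (c-h)..(c+h), |qY T x y| :=
      intervalIntegral.integral_add_adjacent_intervals
        (hqc.abs.intervalIntegrable _ _) (hqc.abs.intervalIntegrable _ _)
    linarith
  -- the dichotomy
  have hdich : f0 * h ≤ (∫ y in Icc (c-h) (c+h), f (T x y)) ∨
      ∃ d, 0 < d ∧ d ≤ h ∧ f0 * d ≤ (∫ y in Icc (c-h) (c+h), f (T x y)) ∧
        ζ^2/d ≤ ∫ y in Icc (c-h) (c+h), (qY T x y)^2 := by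
    obtain ⟨y', hy'mem, hy'val⟩ := hex
    have hfnn' : ∀ y : ℝ, 0 ≤ f (T x y) := fun y => hfnn _ (hTrange x y)
    rcases le_or_gt y' c with hyc | hyc
    · -- use [y', y'+h]
      have hsub1 : c - h ≤ y' := hy'mem.1
      have hsub2 : y' + h ≤ c + h := by linarith
      rcases exit_main f g (qY T x) θ1 θ4 ζ f0 h y' hζ hf0 hh hq hqc hfgc hfpos hfnn'
          hy'val with hA | ⟨d, hd0, hdh, hFd, hQd⟩
      · left
        calc f0 * h ≤ ∫ y in y'..(y'+h), f (T x y) := hA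
          _ ≤ _ := subint_le _ hfgc hfnn' _ _ _ _ (by linarith) hsub1 hsub2
      · right
        refine ⟨d, hd0, hdh, ?_, ?_⟩
        · calc f0 * d ≤ ∫ y in y'..(y'+h), f (T x y) := hFd
            _ ≤ _ := subint_le _ hfgc hfnn' _ _ _ _ (by linarith) hsub1 hsub2
        · calc ζ^2/d ≤ ∫ y in y'..(y'+h), (qY T x y)^2 := hQd
            _ ≤ _ := subint_le _ (hqc.pow 2) (fun y => sq_nonneg _) _ _ _ _
                (by linarith) hsub1 hsub2
    · -- use [y'-h, y'] via reflection
      have hsub1 : c - h ≤ y' - h := by linarith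
      have hsub2 : y' ≤ c + h := hy'mem.2
      have hrefl : ∀ t : ℝ, HasDerivAt (fun t => g (y' - t)) (-(qY T x (y' - t))) t := by
        intro t
        have h1 : HasDerivAt (fun s : ℝ => y' - s) (-1) t := by
          simpa using (hasDerivAt_id t).const_sub y'
        have := (hq (y' - t)).comp t h1
        simpa [mul_comm, Function.comp_def] using this
      have hqrc : Continuous (fun t => -(qY T x (y' - t))) :=
        (hqc.comp (continuous_const.sub continuous_id)).neg
      have hfgrc : Continuous (fun t => f (g (y' - t))) :=
        hfgc.comp (continuous_const.sub continuous_id)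
      have hval : g (y' - 0) ∈ Icc θ1 θ4 := by simpa using hy'val
      rcases exit_main f (fun t => g (y' - t)) (fun t => -(qY T x (y' - t))) θ1 θ4 ζ f0 h 0
          hζ hf0 hh hrefl hqrc hfgrc hfpos (fun y => hfnn' _) hval
        with hA | ⟨d, hd0, hdh, hFd, hQd⟩
      · left
        have hconv : (∫ t in (0:ℝ)..(0+h), f (g (y' - t))) = ∫ y in (y'-h)..y', f (T x y) := by
          rw [intervalIntegral.integral_comp_sub_left (fun y => f (T x y)) y']
          norm_num
        rw [hconv] at hA
        calc f0 * h ≤ ∫ y in (y'-h)..y', f (T x y) := hA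
          _ ≤ _ := subint_le _ hfgc hfnn' _ _ _ _ (by linarith) hsub1 hsub2
      · right
        have hconvF : (∫ t in (0:ℝ)..(0+h), f (g (y' - t))) = ∫ y in (y'-h)..y', f (T x y) := by
          rw [intervalIntegral.integral_comp_sub_left (fun y => f (T x y)) y']
          norm_num
        have hconvQ : (∫ t in (0:ℝ)..(0+h), (-(qY T x (y' - t)))^2)
            = ∫ y in (y'-h)..y', (qY T x y)^2 := by
          have : ∀ t : ℝ, (-(qY T x (y' - t)))^2 = (fun y => (qY T x y)^2) (y' - t) := by
            intro t; simp
          simp_rw [this]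
          rw [intervalIntegral.integral_comp_sub_left (fun y => (qY T x y)^2) y']
          norm_num
        rw [hconvF] at hFd
        rw [hconvQ] at hQd
        refine ⟨d, hd0, hdh, ?_, ?_⟩
        · calc f0 * d ≤ ∫ y in (y'-h)..y', f (T x y) := hFd
            _ ≤ _ := subint_le _ hfgc hfnn' _ _ _ _ (by linarith) hsub1 hsub2
        · calc ζ^2/d ≤ ∫ y in (y'-h)..y', (qY T x y)^2 := hQd
            _ ≤ _ := subint_le _ (hqc.pow 2) (fun y => sq_nonneg _) _ _ _ _
                (by linarith) hsub1 hsub2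
  -- final assembly
  set F := ∫ y in Icc (c-h) (c+h), f (T x y) with hFdef
  set A2 := ∫ y in Icc (c-h) (c+h), (qX T x y ^ 2 + qY T x y ^ 2) with hA2def
  set QI := ∫ y in Icc (c-h) (c+h), (qY T x y)^2 with hQIdef
  have hQI0 : 0 ≤ QI := MeasureTheory.setIntegral_nonneg measurableSet_Icc
    (fun y _ => sq_nonneg _)
  have hQIA2 : QI ≤ A2 := by
    apply MeasureTheory.setIntegral_mono_on ((hqc.pow 2).integrableOn_Icc)
      (((hqxc.pow 2).add (hqc.pow 2)).integrableOn_Icc) measurableSet_Icc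
    intro y _
    show qY T x y ^ 2 ≤ qX T x y ^ 2 + qY T x y ^ 2
    nlinarith [sq_nonneg (qX T x y)]
  set s := Real.sqrt f0 with hsdef
  have hs : 0 < s := Real.sqrt_pos.mpr hf0
  have hs2 : s^2 = f0 := Real.sq_sqrt hf0.le
  have hζi : (2:ℝ) ≤ ζ⁻¹ := by
    have h1 := mul_inv_cancel₀ hζ.ne'
    have h2 : 0 < ζ⁻¹ := inv_pos.mpr hζ
    nlinarith
  have hLHS : |κ * ∫ y in Icc (c-h) (c+h), kerG h (y-c) * qYY T x y|
      = κ * |∫ y in (c-h)..(c+h), kerG h (y-c) * qYY T x y| := by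
    rw [hIcc_Ioc, abs_mul, abs_of_pos hκ]
  rcases hdich with hcaseA | ⟨d, hd0, hdh, hFd, hQd⟩
  · -- case A
    set lam := v0 * s / (2*κ) with hlamdef
    have hlam : 0 < lam := by positivity
    have habsint : (∫ y in (c-h)..(c+h), |qY T x y|)
        ≤ lam * h + (1/(2*lam)) * ∫ y in (c-h)..(c+h), (qY T x y)^2 := by
      have hmono := intervalIntegral.integral_mono_on hch
        (hqc.abs.intervalIntegrable (μ := volume) (c-h) (c+h))
        ((intervalIntegrable_const (c := lam/(2*1))).add
          (((hqc.pow 2).intervalIntegrable (c-h) (c+h)).const_mul (1/(2*lam))))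
        (fun y _ => by simpa using amgm_abs 1 lam (qY T x y) one_pos hlam)
      rw [intervalIntegral.integral_add intervalIntegrable_const
          (((hqc.pow 2).intervalIntegrable (c-h) (c+h)).const_mul (1/(2*lam))),
        intervalIntegral.integral_const, intervalIntegral.integral_const_mul] at hmono
      have he : ((c+h) - (c-h)) • (lam/(2*1)) = lam * h := by
        rw [smul_eq_mul]; ring
      rw [he] at hmono
      exact hmono
    have hQc : (∫ y in (c-h)..(c+h), (qY T x y)^2) = QI := (hIcc_Ioc _).symm
    rw [hQc] at habsint
    rw [hLHS]
    calc κ * |∫ y in (c-h)..(c+h), kerG h (y-c) * qYY T x y|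
        ≤ κ * ((1/h) * (lam * h + (1/(2*lam)) * QI)) := by
          refine mul_le_mul_of_nonneg_left (hB2.trans ?_) hκ.le
          exact mul_le_mul_of_nonneg_left habsint (by positivity)
      _ ≤ 2 * s⁻¹ * ζ⁻¹ * (κ / (v0 * h)) * ((v0^2/κ) * (f0 * h) + κ * QI) := by
          rw [hlamdef]
          rw [show (2:ℝ) * s⁻¹ * ζ⁻¹ * (κ / (v0 * h)) * ((v0^2/κ) * (f0 * h) + κ * QI)
            = (2 * s⁻¹ * (κ / (v0 * h)) * ((v0^2/κ) * (f0 * h) + κ * QI)) * ζ⁻¹ by ring]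
          have hP0 : 0 ≤ 2 * s⁻¹ * (κ / (v0 * h)) * ((v0^2/κ) * (f0 * h) + κ * QI) := by
            have : 0 ≤ (v0^2/κ) * (f0 * h) + κ * QI := by positivity
            positivity
          calc κ * ((1/h) * (v0 * s / (2*κ) * h + (1/(2*(v0 * s / (2*κ)))) * QI))
              ≤ (2 * s⁻¹ * (κ / (v0 * h)) * ((v0^2/κ) * (f0 * h) + κ * QI)) * 2 := by
                rw [← hs2]
                exact caseA_arith κ v0 h s QI hκ hv0 hh hs hQI0
            _ ≤ _ := mul_le_mul_of_nonneg_left hζi hP0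
      _ ≤ _ := mul_le_mul_of_nonneg_left
          (add_le_add (mul_le_mul_of_nonneg_left hcaseA (by positivity))
            (mul_le_mul_of_nonneg_left hQIA2 hκ.le)) (by positivity)
  · -- case B
    have hAM : 2 * v0 * s * ζ ≤ (v0^2/κ) * (f0*d) + κ * (ζ^2/d) :=
      caseB_arith κ v0 s ζ d f0 hκ hv0 hs hζ hd0 hs2
    have hbr : 2 * v0 * s * ζ ≤ (v0^2/κ) * F + κ * A2 := by
      exact hAM.trans (add_le_add (mul_le_mul_of_nonneg_left hFd (by positivity))
        (mul_le_mul_of_nonneg_left (hQd.trans hQIA2) hκ.le))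
    rw [hLHS]
    calc κ * |∫ y in (c-h)..(c+h), kerG h (y-c) * qYY T x y| ≤ κ * (2/h) :=
          mul_le_mul_of_nonneg_left hB1 hκ.le
      _ ≤ 2 * s⁻¹ * ζ⁻¹ * (κ / (v0 * h)) * (2 * v0 * s * ζ) := by
          have hstep : (2:ℝ) * s⁻¹ * ζ⁻¹ * (κ / (v0 * h)) * (2 * v0 * s * ζ)
              = 4 * (κ/h) := by
            field_simp
            ring
          rw [hstep, show κ * (2/h) = 2 * (κ/h) by ring]
          have h9 : 0 ≤ κ/h := by positivity
          linarith
      _ ≤ _ := mul_le_mul_of_nonneg_left hbr (by positivity)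


end
end

section
/- Let T(·,·) be a C¹ function on the strip with values in [0,1], let I_j = [c_j−h_j, c_j+h_j] ⊂ [0,H] be an interval on which ‖u‖_{∞,j}/2 ≤ |u(y)| ≤ ‖u‖_{∞,j} and u(y) > 0 (‖u‖_{∞,j} = sup_{I_j}|u|), let θ₃ < θ₄ and F_j = ∫_{c_j−h_j}^{c_j+h_j} G(h_j, y−c_j) u(y) dy, and suppose x₀ and η₀ > 0 are such that ∫_{c_j−h_j}^{c_j+h_j} G(h_j, y−c_j) u(y) [T(x₀,y) − T(x₀+η₀,y)] dy ≥ (θ₄−θ₃) F_j. Then there is a universal constant C > 0 such that | (κ/η₀) ∫_{c_j−h_j}^{c_j+h_j} G(h_j, y−c_j) [T(x₀+η₀,y) − T(x₀,y)] dy | ≤ C κ (θ₄−θ₃)^{-2} ∫_{c_j−h_j}^{c_j+h_j} ∫_{x₀}^{x₀+η₀} |∇T(x,y)|² dx dy. -/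
set_option autoImplicit false
set_option maxHeartbeats 1000000

open MeasureTheory Real Filter Set

noncomputable section

lemma cs_helper {s : Set ℝ} (hμ : volume s ≠ ⊤) {f : ℝ → ℝ}
    (hf : IntegrableOn f s) (hf2 : IntegrableOn (fun x => f x ^ 2) s) :
    (∫ x in s, f x) ^ 2 ≤ (volume s).toReal * ∫ x in s, f x ^ 2 := by
  set μt := (volume s).toReal with hμt
  set a := ∫ x in s, f x with ha
  have hInn : 0 ≤ ∫ x in s, f x ^ 2 := integral_nonneg fun x => sq_nonneg _
  by_cases hs0 : volume s = 0
  · have ha0 : a = 0 := by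
      rw [ha, Measure.restrict_eq_zero.mpr hs0, integral_zero_measure]
    rw [ha0]
    have : 0 ≤ μt * ∫ x in s, f x ^ 2 := mul_nonneg ENNReal.toReal_nonneg hInn
    simpa using this
  · have hμpos : 0 < μt := ENNReal.toReal_pos hs0 hμ
    have key : 0 ≤ ∫ x in s, (μt * f x - a) ^ 2 := integral_nonneg fun x => sq_nonneg _
    have hcint : IntegrableOn (fun _ : ℝ => a ^ 2) s := by
      refine (integrableOn_const_iff).mpr (Or.inr hμ.lt_top)
    have expand : ∫ x in s, (μt * f x - a) ^ 2
        = μt ^ 2 * (∫ x in s, f x ^ 2) - 2 * μt * a * a + a ^ 2 * μt := by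
      have e : ∀ x, (μt * f x - a) ^ 2
          = (μt ^ 2 * f x ^ 2 - 2 * μt * a * f x) + a ^ 2 := fun x => by ring
      simp_rw [e]
      have h1 : IntegrableOn (fun x => μt ^ 2 * f x ^ 2) s := hf2.const_mul _
      have h2 : IntegrableOn (fun x => 2 * μt * a * f x) s := hf.const_mul _
      have h12 : IntegrableOn (fun x => μt ^ 2 * f x ^ 2 - 2 * μt * a * f x) s := h1.sub h2
      rw [integral_add h12 hcint, integral_sub h1 h2,
        integral_const_mul, integral_const_mul, setIntegral_const, smul_eq_mul, measureReal_def, ← hμt]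
      ring
    nlinarith [key, expand, hμpos, hInn]

lemma qX_hasDerivAt {T : ℝ → ℝ → ℝ} (hT : ContDiff ℝ 1 fun p : ℝ × ℝ => T p.1 p.2) (x y : ℝ) :
    HasDerivAt (fun s => T s y) (qX T x y) x := by
  have h1 : HasDerivAt (fun s : ℝ => (s, y)) ((1 : ℝ), (0 : ℝ)) x :=
    (hasDerivAt_id x).prodMk (hasDerivAt_const x y)
  have h2 : HasDerivAt (fun s => T s y)
      (fderiv ℝ (fun p : ℝ × ℝ => T p.1 p.2) (x, y) (1, 0)) x :=
    by have := ((hT.differentiable one_ne_zero) (x, y)).hasFDerivAt.comp_hasDerivAt x h1; exact this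
  exact h2.differentiableAt.hasDerivAt

lemma qX_cont {T : ℝ → ℝ → ℝ} (hT : ContDiff ℝ 1 fun p : ℝ × ℝ => T p.1 p.2) :
    Continuous fun p : ℝ × ℝ => qX T p.1 p.2 := by
  have e : (fun p : ℝ × ℝ => qX T p.1 p.2)
      = fun p : ℝ × ℝ => fderiv ℝ (fun p : ℝ × ℝ => T p.1 p.2) p ((1 : ℝ), (0 : ℝ)) := by
    funext p
    have h1 : HasDerivAt (fun s : ℝ => (s, p.2)) ((1 : ℝ), (0 : ℝ)) p.1 :=
      (hasDerivAt_id p.1).prodMk (hasDerivAt_const p.1 p.2)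
    have h2 : HasDerivAt (fun s => T s p.2)
        (fderiv ℝ (fun p : ℝ × ℝ => T p.1 p.2) (p.1, p.2) (1, 0)) p.1 :=
      by have := ((hT.differentiable one_ne_zero) (p.1, p.2)).hasFDerivAt.comp_hasDerivAt p.1 h1; exact this
    exact h2.deriv
  rw [e]
  exact (ContinuousLinearMap.apply ℝ ℝ ((1 : ℝ), (0 : ℝ))).continuous.comp
    (hT.continuous_fderiv one_ne_zero)

lemma qY_cont {T : ℝ → ℝ → ℝ} (hT : ContDiff ℝ 1 fun p : ℝ × ℝ => T p.1 p.2) :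
    Continuous fun p : ℝ × ℝ => qY T p.1 p.2 := by
  have e : (fun p : ℝ × ℝ => qY T p.1 p.2)
      = fun p : ℝ × ℝ => fderiv ℝ (fun p : ℝ × ℝ => T p.1 p.2) p ((0 : ℝ), (1 : ℝ)) := by
    funext p
    have h1 : HasDerivAt (fun s : ℝ => (p.1, s)) ((0 : ℝ), (1 : ℝ)) p.2 :=
      (hasDerivAt_const p.2 p.1).prodMk (hasDerivAt_id p.2)
    have h2 : HasDerivAt (fun s => T p.1 s)
        (fderiv ℝ (fun p : ℝ × ℝ => T p.1 p.2) (p.1, p.2) (0, 1)) p.2 :=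
      ((hT.differentiable one_ne_zero) (p.1, p.2)).hasFDerivAt.comp_hasDerivAt p.2 h1
    exact h2.deriv
  rw [e]
  exact (ContinuousLinearMap.apply ℝ ℝ ((0 : ℝ), (1 : ℝ))).continuous.comp
    (hT.continuous_fderiv one_ne_zero)

/-- Lemma 2.1: control of the averaged temperature difference
across `[x₀, x₀+η₀]` by the integral of `|∇T|²`, with a universal constant. -/
theorem averaged_difference_bound :
    ∃ C > 0, ∀ (κ H θ3 θ4 c h x0 η0 F M : ℝ) (u : ℝ → ℝ) (T : ℝ → ℝ → ℝ),
      0 < κ → 0 < H → 0 < h → 0 < η0 → θ3 < θ4 →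
      -- the shear profile
      ContDiffOn ℝ 1 u (Icc 0 H) →
      -- the function T
      ContDiff ℝ 1 (fun p : ℝ × ℝ => T p.1 p.2) →
      (∀ x' y' : ℝ, T x' y' ∈ Icc (0 : ℝ) 1) →
      -- the interval I_j ⊆ [0,H], on which ‖u‖/2 ≤ |u| ≤ ‖u‖ and u > 0
      Icc (c - h) (c + h) ⊆ Icc 0 H →
      (∀ y ∈ Icc (c - h) (c + h), M / 2 ≤ |u y| ∧ |u y| ≤ M) →
      (∀ y ∈ Icc (c - h) (c + h), 0 < u y) →
      F = (∫ y in Icc (c - h) (c + h), kerG h (y - c) * u y) →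
      -- the flux drop hypothesis
      (θ4 - θ3) * F ≤
        (∫ y in Icc (c - h) (c + h),
          kerG h (y - c) * u y * (T x0 y - T (x0 + η0) y)) →
      |(κ / η0) * ∫ y in Icc (c - h) (c + h),
          kerG h (y - c) * (T (x0 + η0) y - T x0 y)| ≤
        C * κ * ((θ4 - θ3) ^ 2)⁻¹ *
          ∫ y in Icc (c - h) (c + h), ∫ x in Icc x0 (x0 + η0),
            (qX T x y ^ 2 + qY T x y ^ 2) := by
  refine ⟨8, by norm_num, ?_⟩
  intro κ H θ3 θ4 c h x0 η0 F M u T hκ hH hh hη hθ hu hT hT01 hIH huM hupos hF hflux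
  have hθ' : 0 < θ4 - θ3 := sub_pos.mpr hθ
  set I : Set ℝ := Icc (c - h) (c + h) with hI
  set J : Set ℝ := Icc x0 (x0 + η0) with hJ
  have hImeas : MeasurableSet I := measurableSet_Icc
  have hIvol : (volume I).toReal = 2 * h := by
    rw [hI, Real.volume_Icc, ENNReal.toReal_ofReal (by linarith)]; ring
  have hJvol : (volume J).toReal = η0 := by
    rw [hJ, Real.volume_Icc, ENNReal.toReal_ofReal (by linarith)]; ring
  have hIfin : volume I ≠ ⊤ := by rw [hI, Real.volume_Icc]; exact ENNReal.ofReal_ne_top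
  have hJfin : volume J ≠ ⊤ := by rw [hJ, Real.volume_Icc]; exact ENNReal.ofReal_ne_top
  -- kernel facts
  have hTc : Continuous fun p : ℝ × ℝ => T p.1 p.2 := hT.continuous
  have hGc : Continuous fun y : ℝ => kerG h (y - c) := by
    unfold kerG; fun_prop
  have hG0 : ∀ ξ : ℝ, 0 ≤ kerG h ξ := fun ξ => le_max_right _ _
  have hG1 : ∀ ξ : ℝ, kerG h ξ ≤ 1 := by
    intro ξ
    have : 0 ≤ |ξ| / h := div_nonneg (abs_nonneg _) hh.le
    exact max_le (by linarith) (by norm_num)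
  have hGhalf : ∀ ξ : ℝ, |ξ| ≤ h / 2 → 1 / 2 ≤ kerG h ξ := by
    intro ξ hξ
    have : |ξ| / h ≤ 1 / 2 := (div_le_iff₀ hh).mpr (by linarith)
    exact le_max_of_le_left (by linarith)
  -- u facts
  have hM : 0 < M := by
    have hc : c ∈ I := by rw [hI]; exact mem_Icc.mpr ⟨by linarith, by linarith⟩
    exact lt_of_lt_of_le (hupos c hc) ((le_abs_self _).trans (huM c hc).2)
  have hulb : ∀ y ∈ I, M / 2 ≤ u y := fun y hy => by
    have := (huM y hy).1; rwa [abs_of_pos (hupos y hy)] at this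
  have huub : ∀ y ∈ I, u y ≤ M := fun y hy => by
    have := (huM y hy).2; rwa [abs_of_pos (hupos y hy)] at this
  have huc : ContinuousOn u I := hu.continuousOn.mono hIH
  -- ΔT
  have hΔc : Continuous fun y => T (x0 + η0) y - T x0 y := by
    have h1 : Continuous fun y => T (x0 + η0) y :=
      hTc.comp (continuous_const.prodMk continuous_id)
    have h2 : Continuous fun y => T x0 y :=
      hTc.comp (continuous_const.prodMk continuous_id)
    exact h1.sub h2
  set Δ : ℝ → ℝ := fun y => T (x0 + η0) y - T x0 y with hΔ
  have hΔbd : ∀ y, |Δ y| ≤ 1 := by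
    intro y
    have h1 := hT01 (x0 + η0) y
    have h2 := hT01 x0 y
    rw [mem_Icc] at h1 h2
    rw [abs_le]
    constructor <;> simp only [hΔ] <;> [linarith [h1.1, h2.2]; linarith [h1.2, h2.1]]
  -- qX continuity in x for fixed y
  have qXcy : ∀ y : ℝ, Continuous fun x => qX T x y := fun y =>
    (qX_cont hT).comp (continuous_id.prodMk continuous_const)
  -- FTC
  have hFTC : ∀ y : ℝ, Δ y = ∫ x in J, qX T x y := by
    intro y
    have hint : IntervalIntegrable (fun x => qX T x y) volume x0 (x0 + η0) :=
      (qXcy y).intervalIntegrable _ _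
    have h1 := intervalIntegral.integral_eq_sub_of_hasDerivAt
      (f := fun s => T s y) (f' := fun x => qX T x y)
      (fun x _ => qX_hasDerivAt hT x y) hint
    rw [hJ, integral_Icc_eq_integral_Ioc,
      ← intervalIntegral.integral_of_le (by linarith : x0 ≤ x0 + η0), h1]
  -- product-integrability of parametric integrals
  have prodInt : ∀ g : ℝ × ℝ → ℝ, Continuous g →
      IntegrableOn (fun y => ∫ x in J, g (y, x)) I := by
    intro g hg
    have h1 : IntegrableOn g (I ×ˢ J) :=
      hg.continuousOn.integrableOn_compact (isCompact_Icc.prod isCompact_Icc)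
    have h2 : Integrable g ((volume.restrict I).prod (volume.restrict J)) := by
      rw [Measure.prod_restrict, ← Measure.volume_eq_prod]; exact h1
    exact h2.integral_prod_left
  have hD1int : IntegrableOn (fun y => ∫ x in J, qX T x y ^ 2) I :=
    prodInt (fun p => qX T p.2 p.1 ^ 2) (((qX_cont hT).comp continuous_swap).pow 2)
  have hD2int : IntegrableOn (fun y => ∫ x in J, qY T x y ^ 2) I :=
    prodInt (fun p => qY T p.2 p.1 ^ 2) (((qY_cont hT).comp continuous_swap).pow 2)
  set D1 : ℝ := ∫ y in I, ∫ x in J, qX T x y ^ 2 with hD1def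
  have hD1nn : 0 ≤ D1 :=
    integral_nonneg fun y => integral_nonneg fun x => sq_nonneg _
  -- D ≥ D1
  set Dfull : ℝ := ∫ y in I, ∫ x in J, (qX T x y ^ 2 + qY T x y ^ 2) with hDdef
  have hsplit : ∀ y : ℝ, ∫ x in J, (qX T x y ^ 2 + qY T x y ^ 2)
      = (∫ x in J, qX T x y ^ 2) + ∫ x in J, qY T x y ^ 2 := by
    intro y
    have ix : IntegrableOn (fun x => qX T x y ^ 2) J := by
      rw [hJ]; exact ((qXcy y).pow 2).integrableOn_Icc
    have iy : IntegrableOn (fun x => qY T x y ^ 2) J := by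
      rw [hJ]
      exact (((qY_cont hT).comp (continuous_id.prodMk continuous_const)).pow 2).integrableOn_Icc
    exact integral_add ix iy
  have hD1leD : D1 ≤ Dfull := by
    have h2 : Dfull = D1 + ∫ y in I, ∫ x in J, qY T x y ^ 2 := by
      rw [hDdef, hD1def, ← integral_add hD1int hD2int]
      exact integral_congr_ae (Filter.Eventually.of_forall fun y => hsplit y)
    have h3 : 0 ≤ ∫ y in I, ∫ x in J, qY T x y ^ 2 :=
      integral_nonneg fun y => integral_nonneg fun x => sq_nonneg _
    linarith
  -- lower bound for F
  have hGuInt : IntegrableOn (fun y => kerG h (y - c) * u y) I :=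
    (hGc.continuousOn.mul huc).integrableOn_compact isCompact_Icc
  have hGu0 : ∀ y ∈ I, 0 ≤ kerG h (y - c) * u y := fun y hy =>
    mul_nonneg (hG0 _) (hupos y hy).le
  have hFlb : M / 4 * h ≤ F := by
    set I' : Set ℝ := Icc (c - h / 2) (c + h / 2) with hI'
    have hI'sub : I' ⊆ I := by rw [hI', hI]; exact Icc_subset_Icc (by linarith) (by linarith)
    have hI'vol : (volume I').toReal = h := by
      rw [hI', Real.volume_Icc, ENNReal.toReal_ofReal (by linarith)]; ring
    have step1 : M / 4 * h ≤ ∫ y in I', kerG h (y - c) * u y := by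
      have hconst : ∫ y in I', (M / 4 : ℝ) = h * (M / 4) := by
        rw [setIntegral_const, measureReal_def, hI'vol, smul_eq_mul]
      have hmono : ∫ y in I', (M / 4 : ℝ) ≤ ∫ y in I', kerG h (y - c) * u y := by
        refine setIntegral_mono_on
          ((integrableOn_const_iff).mpr (Or.inr ?_))
          (hGuInt.mono_set hI'sub) measurableSet_Icc ?_
        · rw [hI', Real.volume_Icc]; exact ENNReal.ofReal_lt_top
        · intro y hy
          rw [hI', mem_Icc] at hy
          have hyI : y ∈ I := hI'sub (by rw [hI', mem_Icc]; exact hy)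
          have hker : 1 / 2 ≤ kerG h (y - c) :=
            hGhalf _ (abs_le.mpr ⟨by linarith, by linarith⟩)
          have hu' : M / 2 ≤ u y := hulb y hyI
          calc M / 4 = 1 / 2 * (M / 2) := by ring
          _ ≤ kerG h (y - c) * u y :=
            mul_le_mul hker hu' (by linarith) (hG0 _)
      linarith [hconst, hmono]
    have step2 : ∫ y in I', kerG h (y - c) * u y ≤ ∫ y in I, kerG h (y - c) * u y :=
      setIntegral_mono_set hGuInt
        (ae_restrict_of_forall_mem hImeas hGu0)
        (HasSubset.Subset.eventuallyLE hI'sub)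
    rw [hF]; linarith
  have hFpos : 0 < F := lt_of_lt_of_le (by positivity) hFlb
  -- A and the flux chain
  have hAint : IntegrableOn (fun y => |Δ y|) I := by
    rw [hI]; exact hΔc.abs.integrableOn_Icc
  set A : ℝ := ∫ y in I, |Δ y| with hAdef
  have hfluxUB : ∫ y in I, kerG h (y - c) * u y * (T x0 y - T (x0 + η0) y)
      ≤ ∫ y in I, M * |Δ y| := by
    refine setIntegral_mono_on ?_ ?_ hImeas ?_
    · have hc3 : Continuous fun y => T x0 y - T (x0 + η0) y :=
        (hTc.comp (continuous_const.prodMk continuous_id)).sub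
          (hTc.comp (continuous_const.prodMk continuous_id))
      exact ((hGc.continuousOn.mul huc).mul hc3.continuousOn).integrableOn_compact isCompact_Icc
    · exact (continuous_const.mul hΔc.abs).integrableOn_Icc
    · intro y hy
      have hd : T x0 y - T (x0 + η0) y = -Δ y := by rw [hΔ]; ring
      rw [hd]
      have h1 : kerG h (y - c) * u y * (-Δ y) ≤ kerG h (y - c) * u y * |Δ y| :=
        mul_le_mul_of_nonneg_left (neg_le_abs _) (hGu0 y hy)
      have h2 : kerG h (y - c) * u y ≤ M := by
        calc kerG h (y - c) * u y ≤ 1 * M :=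
          mul_le_mul (hG1 _) (huub y hy) (hupos y hy).le (by norm_num)
        _ = M := one_mul M
      have h3 : kerG h (y - c) * u y * |Δ y| ≤ M * |Δ y| :=
        mul_le_mul_of_nonneg_right h2 (abs_nonneg _)
      linarith
  have hMA : (θ4 - θ3) * F ≤ M * A := by
    have : ∫ y in I, M * |Δ y| = M * A := by rw [hAdef, integral_const_mul]
    linarith [hflux, hfluxUB]
  have hAlb : (θ4 - θ3) * h / 4 ≤ A := by
    have k : (θ4 - θ3) * (M / 4 * h) ≤ M * A := by
      calc (θ4 - θ3) * (M / 4 * h) ≤ (θ4 - θ3) * F :=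
        mul_le_mul_of_nonneg_left hFlb hθ'.le
      _ ≤ M * A := hMA
    have k' : M * ((θ4 - θ3) * h / 4) ≤ M * A := by nlinarith [k]
    exact le_of_mul_le_mul_left k' hM
  have hApos : 0 < A := lt_of_lt_of_le (by positivity) hAlb
  -- θ4 - θ3 ≤ 1
  have hθ1 : θ4 - θ3 ≤ 1 := by
    have hub : ∫ y in I, kerG h (y - c) * u y * (T x0 y - T (x0 + η0) y) ≤ F := by
      rw [hF]
      refine setIntegral_mono_on ?_ hGuInt hImeas ?_
      · have hc3 : Continuous fun y => T x0 y - T (x0 + η0) y :=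
          (hTc.comp (continuous_const.prodMk continuous_id)).sub
            (hTc.comp (continuous_const.prodMk continuous_id))
        exact ((hGc.continuousOn.mul huc).mul hc3.continuousOn).integrableOn_compact isCompact_Icc
      · intro y hy
        have h1 := hT01 x0 y
        have h2 := hT01 (x0 + η0) y
        rw [mem_Icc] at h1 h2
        have hle1 : T x0 y - T (x0 + η0) y ≤ 1 := by linarith [h1.2, h2.1]
        calc kerG h (y - c) * u y * (T x0 y - T (x0 + η0) y)
            ≤ kerG h (y - c) * u y * 1 :=
          mul_le_mul_of_nonneg_left hle1 (hGu0 y hy)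
        _ = kerG h (y - c) * u y := mul_one _
    have : (θ4 - θ3) * F ≤ 1 * F := by rw [one_mul]; exact hflux.trans hub
    exact le_of_mul_le_mul_right this hFpos
  -- Cauchy–Schwarz (inner)
  have hCSin : ∀ y : ℝ, Δ y ^ 2 ≤ η0 * ∫ x in J, qX T x y ^ 2 := by
    intro y
    have ix : IntegrableOn (fun x => qX T x y) J := by
      rw [hJ]; exact (qXcy y).integrableOn_Icc
    have ix2 : IntegrableOn (fun x => qX T x y ^ 2) J := by
      rw [hJ]; exact ((qXcy y).pow 2).integrableOn_Icc
    have := cs_helper hJfin ix ix2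
    rw [hJvol] at this
    rw [hFTC y]
    exact this
  -- ∫ Δ² ≤ η0 * D1
  have hΔ2int : IntegrableOn (fun y => Δ y ^ 2) I := by
    rw [hI]; exact (hΔc.pow 2).integrableOn_Icc
  have hintΔ2 : ∫ y in I, Δ y ^ 2 ≤ η0 * D1 := by
    have h1 : ∫ y in I, Δ y ^ 2 ≤ ∫ y in I, η0 * ∫ x in J, qX T x y ^ 2 :=
      setIntegral_mono_on hΔ2int (hD1int.const_mul η0) hImeas fun y _ => hCSin y
    have h2 : ∫ y in I, η0 * ∫ x in J, qX T x y ^ 2 = η0 * D1 := by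
      rw [hD1def, integral_const_mul]
    linarith
  -- Cauchy–Schwarz (outer)
  have hA2 : A ^ 2 ≤ 2 * h * ∫ y in I, Δ y ^ 2 := by
    have habs2 : IntegrableOn (fun y => |Δ y| ^ 2) I := by
      simpa [sq_abs] using hΔ2int
    have := cs_helper hIfin hAint habs2
    rw [hIvol] at this
    simp_rw [sq_abs] at this
    exact this
  -- combine : A ≤ 8 η0 D1 / θ
  have hkey : A ≤ 8 * η0 * D1 / (θ4 - θ3) := by
    have h1 : A * A ≤ 2 * h * η0 * D1 := by nlinarith [hA2, hintΔ2, hh]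
    have h2 : h * (θ4 - θ3) ≤ 4 * A := by linarith [hAlb]
    rw [le_div_iff₀ hθ']
    nlinarith [mul_le_mul_of_nonneg_left h2 (by positivity : (0:ℝ) ≤ 2 * η0 * D1),
      mul_le_mul_of_nonneg_right h1 hθ'.le, hApos, hD1nn, hη, hθ']
  -- bound on the averaged integral
  have hLHS : |∫ y in I, kerG h (y - c) * (T (x0 + η0) y - T x0 y)| ≤ A := by
    have e1 : |∫ y in I, kerG h (y - c) * (T (x0 + η0) y - T x0 y)|
        ≤ ∫ y in I, |kerG h (y - c)| * |T (x0 + η0) y - T x0 y| := by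
      have := norm_integral_le_integral_norm (μ := volume.restrict I)
        (fun y => kerG h (y - c) * (T (x0 + η0) y - T x0 y))
      simpa [Real.norm_eq_abs, abs_mul] using this
    have e2 : ∫ y in I, |kerG h (y - c)| * |T (x0 + η0) y - T x0 y| ≤ A := by
      rw [hAdef]
      refine setIntegral_mono_on ?_ hAint hImeas ?_
      · rw [hI]; exact (hGc.abs.mul hΔc.abs).integrableOn_Icc
      · intro y hy
        rw [abs_of_nonneg (hG0 _)]
        exact mul_le_of_le_one_left (abs_nonneg _) (hG1 _)
    linarith
  -- final assembly
  have hpos : 0 < κ / η0 := div_pos hκ hη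
  rw [abs_mul, abs_of_pos hpos]
  have step1 : κ / η0 * |∫ y in I, kerG h (y - c) * (T (x0 + η0) y - T x0 y)|
      ≤ κ / η0 * (8 * η0 * D1 / (θ4 - θ3)) :=
    mul_le_mul_of_nonneg_left (hLHS.trans hkey) hpos.le
  have step2 : κ / η0 * (8 * η0 * D1 / (θ4 - θ3)) = 8 * κ * D1 / (θ4 - θ3) := by
    field_simp
  have hinv : (θ4 - θ3)⁻¹ ≤ ((θ4 - θ3) ^ 2)⁻¹ := by
    have hsq : (θ4 - θ3) ^ 2 ≤ θ4 - θ3 := by nlinarith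
    exact inv_anti₀ (by positivity) hsq
  have hDnn : 0 ≤ Dfull := hD1nn.trans hD1leD
  have step3 : 8 * κ * D1 / (θ4 - θ3) ≤ 8 * κ * ((θ4 - θ3) ^ 2)⁻¹ * Dfull := by
    rw [div_eq_mul_inv]
    have hmul : 8 * κ * D1 * (θ4 - θ3)⁻¹ ≤ 8 * κ * Dfull * ((θ4 - θ3) ^ 2)⁻¹ := by
      refine mul_le_mul (mul_le_mul_of_nonneg_left hD1leD (by positivity)) hinv
        (by positivity) (by positivity)
    calc 8 * κ * D1 * (θ4 - θ3)⁻¹ ≤ 8 * κ * Dfull * ((θ4 - θ3) ^ 2)⁻¹ := hmul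
    _ = 8 * κ * ((θ4 - θ3) ^ 2)⁻¹ * Dfull := by ring
  linarith [step1, step2, step3]


end
end

section
/- In the setting of the percolating-flow tube D_j^+ with region D̃_j^+ and with η₀ = inf{η > 0 : ∫ k_j(ρ) T(ρ, ξ₀+η) dρ = θ₃ F_j} where θ₃ = θ₄ − (θ₄−θ₁)/3, there exists a constant C > 0 depending only on the constants in the coordinate bounds such that | (κ/(η₀ h_j)) ∫₀^{h_j} dδ ∫₀^{η₀} dα ∫_{c_j−δ}^{c_j+δ} dρ ω^{-1}(ρ, ξ₀+α) ∂T/∂ξ(ρ, ξ₀+α) | ≤ C [ f₀^{-1/2} (θ₄−θ₁)^{-1} min(θ₄−θ₁, ζ)^{-1} (κ/(v₀ h_j)) ∫_{D̃_j^+} ( (v₀²/κ) f(T) + κ|∇T|² ) dx dy + (θ₄−θ₁)^{-2} κ ∫_{D̃_j^+} |∇T|² dx dy ]. -/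
set_option autoImplicit false

open MeasureTheory Real Filter Set

noncomputable section

/-- partial derivative in `ρ` of a function of `(ρ,ξ)`. -/
def qR (T : ℝ → ℝ → ℝ) (ρ ξ : ℝ) : ℝ := deriv (fun r => T r ξ) ρ
/-- partial derivative in `ξ`. -/
def qXi (T : ℝ → ℝ → ℝ) (ρ ξ : ℝ) : ℝ := deriv (fun s => T ρ s) ξ

/-- the function `ω = E₂/E₁`. -/
def omg (Ea Eb : ℝ → ℝ → ℝ) (ρ ξ : ℝ) : ℝ := Eb ρ ξ / Ea ρ ξ

/-- `|∇T|²` expressed in the orthogonal coordinates `(ρ,ξ)` with metric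
`dx² + dy² = E₁²dρ² + E₂²dξ²`. -/
def gradSq (T Ea Eb : ℝ → ℝ → ℝ) (ρ ξ : ℝ) : ℝ :=
  (qR T ρ ξ / Ea ρ ξ) ^ 2 + (qXi T ρ ξ / Eb ρ ξ) ^ 2

/-! ### Auxiliary lemmas -/

/-- slice derivative in the second variable. -/
lemma hasDerivAt_snd' {T : ℝ → ℝ → ℝ} (hT : ContDiff ℝ 2 (fun p : ℝ × ℝ => T p.1 p.2))
    (ρ ξ : ℝ) :
    HasDerivAt (fun s => T ρ s) (fderiv ℝ (fun p : ℝ × ℝ => T p.1 p.2) (ρ, ξ) (0, 1)) ξ := by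
  have h1 : HasFDerivAt (fun p : ℝ × ℝ => T p.1 p.2)
      (fderiv ℝ (fun p : ℝ × ℝ => T p.1 p.2) (ρ, ξ)) (ρ, ξ) :=
    ((hT.differentiable (by norm_num)) (ρ, ξ)).hasFDerivAt
  have h2 : HasDerivAt (fun s : ℝ => ((ρ, s) : ℝ × ℝ)) ((0 : ℝ), (1 : ℝ)) ξ :=
    (hasDerivAt_const ξ ρ).prodMk (hasDerivAt_id ξ)
  exact h1.comp_hasDerivAt ξ h2

lemma hasDerivAt_fst' {T : ℝ → ℝ → ℝ} (hT : ContDiff ℝ 2 (fun p : ℝ × ℝ => T p.1 p.2))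
    (ρ ξ : ℝ) :
    HasDerivAt (fun r => T r ξ) (fderiv ℝ (fun p : ℝ × ℝ => T p.1 p.2) (ρ, ξ) (1, 0)) ρ := by
  have h1 : HasFDerivAt (fun p : ℝ × ℝ => T p.1 p.2)
      (fderiv ℝ (fun p : ℝ × ℝ => T p.1 p.2) (ρ, ξ)) (ρ, ξ) :=
    ((hT.differentiable (by norm_num)) (ρ, ξ)).hasFDerivAt
  have h2 : HasDerivAt (fun r : ℝ => ((r, ξ) : ℝ × ℝ)) ((1 : ℝ), (0 : ℝ)) ρ :=
    (hasDerivAt_id ρ).prodMk (hasDerivAt_const ρ ξ)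
  exact h1.comp_hasDerivAt ρ h2

lemma qXi_eq' {T : ℝ → ℝ → ℝ} (hT : ContDiff ℝ 2 (fun p : ℝ × ℝ => T p.1 p.2)) (ρ ξ : ℝ) :
    qXi T ρ ξ = fderiv ℝ (fun p : ℝ × ℝ => T p.1 p.2) (ρ, ξ) (0, 1) :=
  (hasDerivAt_snd' hT ρ ξ).deriv

lemma qR_eq' {T : ℝ → ℝ → ℝ} (hT : ContDiff ℝ 2 (fun p : ℝ × ℝ => T p.1 p.2)) (ρ ξ : ℝ) :
    qR T ρ ξ = fderiv ℝ (fun p : ℝ × ℝ => T p.1 p.2) (ρ, ξ) (1, 0) :=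
  (hasDerivAt_fst' hT ρ ξ).deriv

lemma qXi_hasDerivAt {T : ℝ → ℝ → ℝ} (hT : ContDiff ℝ 2 (fun p : ℝ × ℝ => T p.1 p.2))
    (ρ ξ : ℝ) : HasDerivAt (fun s => T ρ s) (qXi T ρ ξ) ξ := by
  rw [qXi_eq' hT]; exact hasDerivAt_snd' hT ρ ξ

lemma qXi_cont' {T : ℝ → ℝ → ℝ} (hT : ContDiff ℝ 2 (fun p : ℝ × ℝ => T p.1 p.2)) :
    Continuous (fun p : ℝ × ℝ => qXi T p.1 p.2) := by
  have h : Continuous (fun p : ℝ × ℝ =>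
      fderiv ℝ (fun p : ℝ × ℝ => T p.1 p.2) p ((0 : ℝ), (1 : ℝ))) :=
    (hT.continuous_fderiv (by norm_num)).clm_apply continuous_const
  exact h.congr (fun p => (qXi_eq' hT p.1 p.2).symm)

lemma qR_cont' {T : ℝ → ℝ → ℝ} (hT : ContDiff ℝ 2 (fun p : ℝ × ℝ => T p.1 p.2)) :
    Continuous (fun p : ℝ × ℝ => qR T p.1 p.2) := by
  have h : Continuous (fun p : ℝ × ℝ =>
      fderiv ℝ (fun p : ℝ × ℝ => T p.1 p.2) p ((1 : ℝ), (0 : ℝ))) :=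
    (hT.continuous_fderiv (by norm_num)).clm_apply continuous_const
  exact h.congr (fun p => (qR_eq' hT p.1 p.2).symm)

/-- parametric continuity for an integrand jointly continuous on `Icc a b ×ˢ univ`. -/
lemma contParam {a b : ℝ} {f : ℝ → ℝ → ℝ}
    (hf : ContinuousOn (fun p : ℝ × ℝ => f p.1 p.2) (Icc a b ×ˢ (univ : Set ℝ))) :
    Continuous (fun ξ => ∫ ρ in Icc a b, f ρ ξ) := by
  rw [continuous_iff_continuousAt]
  intro x₀
  have hcpt : IsCompact (Icc a b ×ˢ Icc (x₀ - 1) (x₀ + 1)) :=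
    isCompact_Icc.prod isCompact_Icc
  have hsub : (Icc a b ×ˢ Icc (x₀ - 1) (x₀ + 1)) ⊆ Icc a b ×ˢ (univ : Set ℝ) :=
    prod_mono_right (subset_univ _)
  obtain ⟨Mb, hMb⟩ := (hcpt.bddAbove_image ((hf.mono hsub).norm)) |>.imp (fun Mb h => h)
  apply continuousAt_of_dominated (bound := fun _ => Mb)
  · filter_upwards with x
    apply ContinuousOn.aestronglyMeasurable ?_ measurableSet_Icc
    intro ρ hρ
    exact (hf.comp (Continuous.continuousOn (by fun_prop))
      (fun y hy => mk_mem_prod hy (mem_univ x))) ρ hρ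
  · filter_upwards [Icc_mem_nhds (by linarith : x₀ - 1 < x₀) (by linarith : x₀ < x₀ + 1)]
      with x hx
    filter_upwards [ae_restrict_mem measurableSet_Icc] with ρ hρ
    exact hMb (mem_image_of_mem _ (mk_mem_prod hρ hx))
  · exact integrableOn_const measure_Icc_lt_top.ne
  · filter_upwards [ae_restrict_mem measurableSet_Icc] with ρ hρ
    have hco : ContinuousOn (fun x => f ρ x) univ := by
      intro x _
      exact (hf.comp (Continuous.continuousOn (by fun_prop))
        (fun y _ => mk_mem_prod hρ (mem_univ y))) x (mem_univ x)
    exact (continuousOn_univ.mp hco).continuousAt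

/-- Cauchy–Schwarz on an interval, elementary form. -/
lemma sq_setIntegral_le {a b : ℝ} (hab : a ≤ b) {g : ℝ → ℝ} (hg0 : ∀ x, 0 ≤ g x)
    (h1 : IntegrableOn g (Icc a b)) (h2 : IntegrableOn (fun x => (g x) ^ 2) (Icc a b)) :
    (∫ x in Icc a b, g x) ^ 2 ≤ (b - a) * ∫ x in Icc a b, (g x) ^ 2 := by
  set I := ∫ x in Icc a b, g x with hI
  set P := ∫ x in Icc a b, (g x) ^ 2 with hP
  have hV : volume.real (Icc a b) = b - a := by
    rw [Real.volume_real_Icc_of_le hab]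
  have hI0 : 0 ≤ I := setIntegral_nonneg measurableSet_Icc (fun x _ => hg0 x)
  have hP0 : 0 ≤ P := setIntegral_nonneg measurableSet_Icc (fun x _ => sq_nonneg _)
  have key : ∀ t : ℝ, 0 < t → 2 * t * I ≤ t ^ 2 * (b - a) + P := by
    intro t ht
    have hpt : ∀ x, 2 * t * g x ≤ t ^ 2 + (g x) ^ 2 := by
      intro x; nlinarith [sq_nonneg (g x - t)]
    have h3 : ∫ x in Icc a b, (2 * t) * g x ≤ ∫ x in Icc a b, (t ^ 2 + (g x) ^ 2) := by
      apply setIntegral_mono_on (h1.const_mul _)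
        ((integrableOn_const
          measure_Icc_lt_top.ne).add h2)
        measurableSet_Icc
      intro x _; exact hpt x
    rw [integral_const_mul] at h3
    rw [integral_add (μ := volume.restrict (Icc a b)) (show IntegrableOn (fun _ : ℝ => t ^ 2) (Icc a b) volume from integrableOn_const
      measure_Icc_lt_top.ne) h2] at h3
    rw [setIntegral_const] at h3
    rw [hV] at h3
    simp only [smul_eq_mul] at h3
    rw [← hI, ← hP] at h3
    linarith
  rcases eq_or_lt_of_le hI0 with hzero | hIpos
  · nlinarith
  · rcases eq_or_lt_of_le (sub_nonneg.mpr hab) with hV0 | hVpos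
    · exfalso
      have hkey := key ((P + 1) / I) (by positivity)
      rw [← hV0] at hkey
      have hIne : I ≠ 0 := ne_of_gt hIpos
      have e : 2 * ((P + 1) / I) * I = 2 * (P + 1) := by field_simp
      rw [e] at hkey
      nlinarith
    · have hkey := key (I / (b - a)) (by positivity)
      have hba : (0:ℝ) < b - a := hVpos
      have hbane : b - a ≠ 0 := ne_of_gt hba
      have e1 : 2 * (I / (b - a)) * I = 2 * (I ^ 2) / (b - a) := by field_simp
      have e2 : (I / (b - a)) ^ 2 * (b - a) = I ^ 2 / (b - a) := by field_simp
      rw [e1, e2] at hkey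
      have e3 : 2 * I ^ 2 / (b - a) = 2 * (I ^ 2 / (b - a)) := by ring
      rw [e3] at hkey
      have h4 : I ^ 2 / (b - a) ≤ P := by linarith
      calc I ^ 2 = (I ^ 2 / (b - a)) * (b - a) := by field_simp
        _ ≤ P * (b - a) := mul_le_mul_of_nonneg_right h4 (le_of_lt hba)
        _ = (b - a) * P := by ring

set_option maxHeartbeats 2000000 in
/-- Lemma 5: bound on the doubly averaged tangential derivative
near the cross-section `ξ₀` by integrals of `f(T)` and `|∇T|²` over `D̃_j⁺`. -/
theorem tube_tangential_derivative_bound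
    (C0 : ℝ) (hC0 : 0 < C0) :
    ∃ C > 0, ∀ (f : ℝ → ℝ) (θ1 θ4 f0 ζ κ v0 c h ξ0 ξ1 F M : ℝ)
      (Ea Eb : ℝ → ℝ → ℝ) (q k : ℝ → ℝ) (T : ℝ → ℝ → ℝ),
      0 < κ → 0 < v0 → 0 < h →
      0 < θ1 → θ1 < θ4 → θ4 < 1 → 0 < f0 → 0 < ζ → ζ ≤ 1 / 2 →
      -- the nonlinearity
      ContDiffOn ℝ 1 f (Icc 0 1) →
      f 0 = 0 → f 1 = 0 →
      (∀ s ∈ Icc (0 : ℝ) 1, 0 ≤ f s) →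
      (∀ θ ∈ Ioo (θ1 - ζ) (θ4 + ζ), f0 < f θ) →
      -- the function T on the tube, values in [0,1]
      ContDiff ℝ 2 (fun p : ℝ × ℝ => T p.1 p.2) →
      (∀ ρ ξ : ℝ, T ρ ξ ∈ Icc (0 : ℝ) 1) →
      -- the metric coefficients of the coordinates
      ContDiff ℝ 1 (fun p : ℝ × ℝ => Ea p.1 p.2) →
      ContDiff ℝ 1 (fun p : ℝ × ℝ => Eb p.1 p.2) →
      (∀ ρ ∈ Icc (c - h) (c + h), ∀ ξ : ℝ, C0⁻¹ ≤ Ea ρ ξ ∧ C0⁻¹ ≤ Eb ρ ξ) →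
      (∀ ρ ∈ Icc (c - h) (c + h), ∀ ξ : ℝ,
        C0⁻¹ ≤ omg Ea Eb ρ ξ ∧ omg Ea Eb ρ ξ ≤ C0) →
      (∀ ρ ∈ Icc (c - h) (c + h), ∀ ξ : ℝ,
        |deriv (fun s => omg Ea Eb ρ s) ξ| ≤ C0 / h ∧
        |deriv (fun r => omg Ea Eb r ξ) ρ| ≤ C0 / h) →
      -- the weight k_j(ρ) = G(h_j, ρ - c_j)·E₁|u|, with E₁|u| non-oscillating
      0 < M →
      (∀ ρ ∈ Icc (c - h) (c + h), M / 2 ≤ q ρ ∧ q ρ ≤ M) →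
      (∀ ρ : ℝ, k ρ = kerG h (ρ - c) * q ρ) →
      F = (∫ ρ in Icc (c - h) (c + h), k ρ) →
      -- the cross-sections ξ₀ < ξ₁
      ξ0 < ξ1 →
      (∫ ρ in Icc (c - h) (c + h), k ρ * T ρ ξ0) = θ4 * F →
      (∫ ρ in Icc (c - h) (c + h), k ρ * T ρ ξ1) = θ1 * F →
      (∀ ξ ∈ Icc ξ0 ξ1,
        θ1 * F ≤ (∫ ρ in Icc (c - h) (c + h), k ρ * T ρ ξ) ∧
        (∫ ρ in Icc (c - h) (c + h), k ρ * T ρ ξ) ≤ θ4 * F) →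
      -- η₀, the first tangential scale at which the k-average drops to θ₃
      ∀ η0 : ℝ,
      {η : ℝ | 0 < η ∧ (∫ ρ in Icc (c - h) (c + h),
        k ρ * T ρ (ξ0 + η)) = (θ4 - (θ4 - θ1) / 3) * F}.Nonempty →
      η0 = sInf {η : ℝ | 0 < η ∧ (∫ ρ in Icc (c - h) (c + h),
        k ρ * T ρ (ξ0 + η)) = (θ4 - (θ4 - θ1) / 3) * F} →
      -- conclusion
      (κ / (η0 * h)) * |∫ δ in Icc (0 : ℝ) h, ∫ α in Icc (0 : ℝ) η0,
          ∫ ρ in Icc (c - δ) (c + δ),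
            (omg Ea Eb ρ (ξ0 + α))⁻¹ * qXi T ρ (ξ0 + α)| ≤
        C * ((Real.sqrt f0)⁻¹ * (θ4 - θ1)⁻¹ * (min (θ4 - θ1) ζ)⁻¹ *
              (κ / (v0 * h)) *
              (∫ ξ in Icc ξ0 ξ1, ∫ ρ in Icc (c - h) (c + h),
                Ea ρ ξ * Eb ρ ξ *
                  ((v0 ^ 2 / κ) * f (T ρ ξ) + κ * gradSq T Ea Eb ρ ξ)) +
            ((θ4 - θ1) ^ 2)⁻¹ * κ *
              ∫ ξ in Icc ξ0 ξ1, ∫ ρ in Icc (c - h) (c + h),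
                Ea ρ ξ * Eb ρ ξ * gradSq T Ea Eb ρ ξ) := by
  refine ⟨24 * C0 ^ 2 + 1, by positivity, ?_⟩
  intro f θ1 θ4 f0 ζ κ v0 c h ξ0 ξ1 F M Ea Eb q k T
  intro hκ hv0 hh hθ1 hθ14 hθ4 hf0 hζ hζhalf hfC1 hf00 hf10 hfnn hflb hT2 hT01 hEa hEb
    hElb hωb hωd hM hq hkdef hFdef hξ01 havg0 havg1 hbr η0 hSne hη0def
  -- basic continuity facts
  have hTc : Continuous (fun p : ℝ × ℝ => T p.1 p.2) := hT2.continuous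
  have hqXc : Continuous (fun p : ℝ × ℝ => qXi T p.1 p.2) := qXi_cont' hT2
  have hqRc : Continuous (fun p : ℝ × ℝ => qR T p.1 p.2) := qR_cont' hT2
  have hEac : Continuous (fun p : ℝ × ℝ => Ea p.1 p.2) := hEa.continuous
  have hEbc : Continuous (fun p : ℝ × ℝ => Eb p.1 p.2) := hEb.continuous
  have hC0inv : (0:ℝ) < C0⁻¹ := inv_pos.mpr hC0
  have ht : (0:ℝ) < θ4 - θ1 := by linarith
  have ht1 : θ4 - θ1 < 1 := by linarith
  -- the second big integrand is continuous on the tube and nonnegative there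
  have hVcontOn : ContinuousOn
      (fun p : ℝ × ℝ => Ea p.1 p.2 * Eb p.1 p.2 * gradSq T Ea Eb p.1 p.2)
      (Icc (c - h) (c + h) ×ˢ (univ : Set ℝ)) := by
    have hEane : ∀ p ∈ Icc (c - h) (c + h) ×ˢ (univ : Set ℝ), Ea p.1 p.2 ≠ 0 :=
      fun p hp => ne_of_gt (lt_of_lt_of_le hC0inv (hElb p.1 hp.1 p.2).1)
    have hEbne : ∀ p ∈ Icc (c - h) (c + h) ×ˢ (univ : Set ℝ), Eb p.1 p.2 ≠ 0 :=
      fun p hp => ne_of_gt (lt_of_lt_of_le hC0inv (hElb p.1 hp.1 p.2).2)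
    unfold gradSq
    exact (hEac.continuousOn.mul hEbc.continuousOn).mul
      (((hqRc.continuousOn.div hEac.continuousOn hEane).pow 2).add
        ((hqXc.continuousOn.div hEbc.continuousOn hEbne).pow 2))
  have hVnn : ∀ ρ ∈ Icc (c - h) (c + h), ∀ ξ : ℝ,
      0 ≤ Ea ρ ξ * Eb ρ ξ * gradSq T Ea Eb ρ ξ := by
    intro ρ hρ ξ
    have h1 := (hElb ρ hρ ξ).1
    have h2 := (hElb ρ hρ ξ).2
    have hg : 0 ≤ gradSq T Ea Eb ρ ξ := add_nonneg (sq_nonneg _) (sq_nonneg _)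
    exact mul_nonneg (mul_nonneg (le_trans hC0inv.le h1) (le_trans hC0inv.le h2)) hg
  -- the inner ∇-energy integral, as a continuous nonnegative function of ξ
  have hθvcont : Continuous (fun ξ => ∫ ρ in Icc (c - h) (c + h),
      Ea ρ ξ * Eb ρ ξ * gradSq T Ea Eb ρ ξ) := contParam hVcontOn
  have hθvnn : ∀ ξ : ℝ, 0 ≤ ∫ ρ in Icc (c - h) (c + h),
      Ea ρ ξ * Eb ρ ξ * gradSq T Ea Eb ρ ξ := fun ξ =>
    setIntegral_nonneg measurableSet_Icc (fun ρ hρ => hVnn ρ hρ ξ)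
  have hB_nn : 0 ≤ ((θ4 - θ1) ^ 2)⁻¹ * κ *
      ∫ ξ in Icc ξ0 ξ1, ∫ ρ in Icc (c - h) (c + h),
        Ea ρ ξ * Eb ρ ξ * gradSq T Ea Eb ρ ξ := by
    have hG0 : 0 ≤ ∫ ξ in Icc ξ0 ξ1, ∫ ρ in Icc (c - h) (c + h),
        Ea ρ ξ * Eb ρ ξ * gradSq T Ea Eb ρ ξ :=
      setIntegral_nonneg measurableSet_Icc (fun ξ _ => hθvnn ξ)
    positivity
  have hA_nn : 0 ≤ (Real.sqrt f0)⁻¹ * (θ4 - θ1)⁻¹ * (min (θ4 - θ1) ζ)⁻¹ *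
      (κ / (v0 * h)) *
      (∫ ξ in Icc ξ0 ξ1, ∫ ρ in Icc (c - h) (c + h),
        Ea ρ ξ * Eb ρ ξ * ((v0 ^ 2 / κ) * f (T ρ ξ) + κ * gradSq T Ea Eb ρ ξ)) := by
    have hmin : (0:ℝ) < min (θ4 - θ1) ζ := lt_min ht hζ
    have hint : 0 ≤ ∫ ξ in Icc ξ0 ξ1, ∫ ρ in Icc (c - h) (c + h),
        Ea ρ ξ * Eb ρ ξ * ((v0 ^ 2 / κ) * f (T ρ ξ) + κ * gradSq T Ea Eb ρ ξ) := by
      apply setIntegral_nonneg measurableSet_Icc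
      intro ξ _
      apply setIntegral_nonneg measurableSet_Icc
      intro ρ hρ
      have h1 := (hElb ρ hρ ξ).1
      have h2 := (hElb ρ hρ ξ).2
      have hfT : 0 ≤ f (T ρ ξ) := hfnn _ (hT01 ρ ξ)
      have hg : 0 ≤ gradSq T Ea Eb ρ ξ := add_nonneg (sq_nonneg _) (sq_nonneg _)
      have hEa0 : 0 ≤ Ea ρ ξ := le_trans (le_of_lt hC0inv) h1
      have hEb0 : 0 ≤ Eb ρ ξ := le_trans (le_of_lt hC0inv) h2
      have hsum : 0 ≤ (v0 ^ 2 / κ) * f (T ρ ξ) + κ * gradSq T Ea Eb ρ ξ :=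
        add_nonneg (mul_nonneg (by positivity) hfT) (mul_nonneg hκ.le hg)
      exact mul_nonneg (mul_nonneg hEa0 hEb0) hsum
    have h1 : (0:ℝ) ≤ (Real.sqrt f0)⁻¹ := inv_nonneg.mpr (Real.sqrt_nonneg _)
    have h2 : (0:ℝ) ≤ (θ4 - θ1)⁻¹ := inv_nonneg.mpr (le_of_lt ht)
    have h3 : (0:ℝ) ≤ (min (θ4 - θ1) ζ)⁻¹ := inv_nonneg.mpr (le_of_lt hmin)
    have h4 : (0:ℝ) ≤ κ / (v0 * h) := by positivity
    positivity
  -- it suffices to bound by the gradient term alone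
  suffices hmain : (κ / (η0 * h)) * |∫ δ in Icc (0 : ℝ) h, ∫ α in Icc (0 : ℝ) η0,
      ∫ ρ in Icc (c - δ) (c + δ),
        (omg Ea Eb ρ (ξ0 + α))⁻¹ * qXi T ρ (ξ0 + α)| ≤
      (24 * C0 ^ 2) * (((θ4 - θ1) ^ 2)⁻¹ * κ *
        ∫ ξ in Icc ξ0 ξ1, ∫ ρ in Icc (c - h) (c + h),
          Ea ρ ξ * Eb ρ ξ * gradSq T Ea Eb ρ ξ) by
    have hc2 : (0:ℝ) ≤ 24 * C0 ^ 2 := by positivity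
    have h1 : 0 ≤ 24 * C0 ^ 2 * ((Real.sqrt f0)⁻¹ * (θ4 - θ1)⁻¹ * (min (θ4 - θ1) ζ)⁻¹ *
        (κ / (v0 * h)) *
        (∫ ξ in Icc ξ0 ξ1, ∫ ρ in Icc (c - h) (c + h),
          Ea ρ ξ * Eb ρ ξ * ((v0 ^ 2 / κ) * f (T ρ ξ) + κ * gradSq T Ea Eb ρ ξ))) :=
      mul_nonneg hc2 hA_nn
    linarith only [hmain, h1, hA_nn, hB_nn]
  -- nonnegativity of η0
  have hSbdd : BddBelow {η : ℝ | 0 < η ∧ (∫ ρ in Icc (c - h) (c + h),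
      k ρ * T ρ (ξ0 + η)) = (θ4 - (θ4 - θ1) / 3) * F} :=
    ⟨0, fun x hx => le_of_lt hx.1⟩
  have hη0nn : 0 ≤ η0 := by
    rw [hη0def]
    exact Real.sInf_nonneg (fun x hx => le_of_lt hx.1)
  -- the trivial case η0 = 0
  rcases eq_or_lt_of_le hη0nn with hη00 | hη0pos
  · rw [← hη00, zero_mul, div_zero, zero_mul]
    have hG0 : 0 ≤ ∫ ξ in Icc ξ0 ξ1, ∫ ρ in Icc (c - h) (c + h),
        Ea ρ ξ * Eb ρ ξ * gradSq T Ea Eb ρ ξ :=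
      setIntegral_nonneg measurableSet_Icc (fun ξ _ => hθvnn ξ)
    positivity
  -- now η0 > 0 ; first deduce F ≥ 0, then F > 0
  have hF0 : 0 ≤ F := by
    have hbr0 := (hbr ξ0 (left_mem_Icc.mpr (le_of_lt hξ01))).1
    rw [havg0] at hbr0
    by_contra hneg
    push_neg at hneg
    have hlt : θ4 * F < θ1 * F := mul_lt_mul_of_neg_right hθ14 hneg
    linarith only [hbr0, hlt]
  rcases eq_or_lt_of_le hF0 with hFzero | hFpos
  · -- F = 0 forces η0 = 0, contradiction with η0 > 0
    exfalso
    have hd : 0 < ξ1 - ξ0 := by linarith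
    have hmem : ∀ η : ℝ, 0 < η → η ≤ ξ1 - ξ0 → η ∈ {η : ℝ | 0 < η ∧
        (∫ ρ in Icc (c - h) (c + h), k ρ * T ρ (ξ0 + η)) = (θ4 - (θ4 - θ1) / 3) * F} := by
      intro η hη1 hη2
      have hmemIcc : ξ0 + η ∈ Icc ξ0 ξ1 := ⟨by linarith, by linarith⟩
      have h1 := (hbr _ hmemIcc).1
      have h2 := (hbr _ hmemIcc).2
      rw [← hFzero] at h1 h2 ⊢
      refine ⟨hη1, ?_⟩
      rw [mul_zero] at h1 h2 ⊢
      linarith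
    set ηc := min (η0 / 2) (ξ1 - ξ0) with hηc
    have hηc1 : 0 < ηc := lt_min (by linarith) hd
    have hle : η0 ≤ ηc := by
      rw [hη0def]
      exact csInf_le hSbdd (hmem ηc hηc1 (min_le_right _ _))
    have : ηc ≤ η0 / 2 := min_le_left _ _
    linarith
  -- main case: F > 0 and η0 > 0
  -- integrability of k
  have hk_int : IntegrableOn k (Icc (c - h) (c + h)) := by
    by_contra hni
    rw [MeasureTheory.integral_undef hni] at hFdef
    rw [hFdef] at hFpos
    exact lt_irrefl 0 hFpos
  -- bounds on k on the tube section
  have hk0 : ∀ ρ ∈ Icc (c - h) (c + h), 0 ≤ k ρ ∧ k ρ ≤ M := by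
    intro ρ hρ
    have hq1 := (hq ρ hρ).1
    have hq2 := (hq ρ hρ).2
    have hker0 : 0 ≤ kerG h (ρ - c) := le_max_right _ _
    have hker1 : kerG h (ρ - c) ≤ 1 := by
      unfold kerG
      apply max_le _ zero_le_one
      have : 0 ≤ |ρ - c| / h := by positivity
      linarith
    constructor
    · rw [hkdef]; exact mul_nonneg hker0 (by linarith)
    · rw [hkdef]
      calc kerG h (ρ - c) * q ρ ≤ 1 * M :=
        mul_le_mul hker1 hq2 (by linarith) zero_le_one
      _ = M := one_mul M
  -- integrability of k·T(·,ξ)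
  have hTle1 : ∀ ρ ξ : ℝ, |T ρ ξ| ≤ 1 := by
    intro ρ ξ
    have := hT01 ρ ξ
    rw [abs_le]; exact ⟨by linarith [this.1], this.2⟩
  have hkT_int : ∀ ξ : ℝ, IntegrableOn (fun ρ => k ρ * T ρ ξ) (Icc (c - h) (c + h)) := by
    intro ξ
    have hTs : Continuous (fun ρ => T ρ ξ) := by
      have hsl : Continuous fun ρ : ℝ => ((ρ, ξ) : ℝ × ℝ) :=
        continuous_id.prodMk continuous_const
      exact hTc.comp hsl
    have h1 : IntegrableOn (fun ρ => T ρ ξ * k ρ) (Icc (c - h) (c + h)) :=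
      hk_int.bdd_mul hTs.aestronglyMeasurable.restrict
        (c := 1) (Filter.Eventually.of_forall fun ρ => by rw [Real.norm_eq_abs]; exact hTle1 ρ ξ)
    exact h1.congr_fun (fun ρ _ => mul_comm _ _) measurableSet_Icc
  -- continuity of the k-average
  have hg_cont : Continuous (fun ξ => ∫ ρ in Icc (c - h) (c + h), k ρ * T ρ ξ) := by
    apply continuous_of_dominated (bound := fun ρ => |k ρ|)
    · intro ξ; exact (hkT_int ξ).aestronglyMeasurable
    · intro ξ
      filter_upwards with ρ
      rw [Real.norm_eq_abs, abs_mul]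
      calc |k ρ| * |T ρ ξ| ≤ |k ρ| * 1 :=
        mul_le_mul_of_nonneg_left (hTle1 ρ ξ) (abs_nonneg _)
      _ = |k ρ| := mul_one _
    · exact hk_int.abs
    · filter_upwards with ρ
      have hsl : Continuous fun ξ : ℝ => ((ρ, ξ) : ℝ × ℝ) :=
        continuous_const.prodMk continuous_id
      exact continuous_const.mul (hTc.comp hsl)
  -- θ₃ F is attained in (ξ0, ξ1] : IVT gives an element of the set below ξ1 - ξ0
  have hd : 0 < ξ1 - ξ0 := by linarith
  have hIVT := intermediate_value_Icc' (le_of_lt hξ01) hg_cont.continuousOn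
  have hmemIcc : (θ4 - (θ4 - θ1) / 3) * F ∈
      Icc ((∫ ρ in Icc (c - h) (c + h), k ρ * T ρ ξ1))
          ((∫ ρ in Icc (c - h) (c + h), k ρ * T ρ ξ0)) := by
    rw [havg0, havg1]
    have hkey : 0 ≤ (θ4 - θ1) * F := mul_nonneg (le_of_lt ht) hF0
    constructor
    · linarith only [hkey]
    · linarith only [hkey]
  obtain ⟨ξs, hξs_mem, hgξs0⟩ := hIVT hmemIcc
  have hgξs : (∫ ρ in Icc (c - h) (c + h), k ρ * T ρ ξs) = (θ4 - (θ4 - θ1) / 3) * F := hgξs0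
  have hηs_pos : 0 < ξs - ξ0 := by
    rcases eq_or_lt_of_le hξs_mem.1 with heq | hlt
    · exfalso
      rw [← heq] at hgξs
      rw [havg0] at hgξs
      linarith only [hgξs, mul_pos ht hFpos]
    · linarith
  have hηs_memS : (ξs - ξ0) ∈ {η : ℝ | 0 < η ∧ (∫ ρ in Icc (c - h) (c + h),
      k ρ * T ρ (ξ0 + η)) = (θ4 - (θ4 - θ1) / 3) * F} := by
    refine ⟨hηs_pos, ?_⟩
    rw [add_sub_cancel]
    exact hgξs
  have hη0d : η0 ≤ ξ1 - ξ0 := by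
    rw [hη0def]
    calc sInf _ ≤ ξs - ξ0 := csInf_le hSbdd hηs_memS
    _ ≤ ξ1 - ξ0 := by linarith [hξs_mem.2]
  -- the infimum is attained: the average at ξ0 + η0 equals θ₃ F
  have hgη0 : (∫ ρ in Icc (c - h) (c + h), k ρ * T ρ (ξ0 + η0)) =
      (θ4 - (θ4 - θ1) / 3) * F := by
    have hZ : IsClosed {η : ℝ | (∫ ρ in Icc (c - h) (c + h), k ρ * T ρ (ξ0 + η)) =
        (θ4 - (θ4 - θ1) / 3) * F} :=
      isClosed_eq (hg_cont.comp (by fun_prop)) continuous_const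
    have hsub : {η : ℝ | 0 < η ∧ (∫ ρ in Icc (c - h) (c + h), k ρ * T ρ (ξ0 + η)) =
        (θ4 - (θ4 - θ1) / 3) * F} ⊆ {η : ℝ | (∫ ρ in Icc (c - h) (c + h),
        k ρ * T ρ (ξ0 + η)) = (θ4 - (θ4 - θ1) / 3) * F} := fun x hx => hx.2
    have hcl : η0 ∈ closure {η : ℝ | 0 < η ∧ (∫ ρ in Icc (c - h) (c + h),
        k ρ * T ρ (ξ0 + η)) = (θ4 - (θ4 - θ1) / 3) * F} := by
      rw [hη0def]
      exact csInf_mem_closure hSne hSbdd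
    exact (hZ.closure_subset_iff.mpr hsub) hcl
  -- joint continuity of translated slices of qXi
  have hmapρ : ∀ ξ : ℝ, Continuous (fun ρ : ℝ => ((ρ, ξ) : ℝ × ℝ)) :=
    fun ξ => continuous_id.prodMk continuous_const
  have hqmap : Continuous (fun p : ℝ × ℝ => qXi T p.2 (ξ0 + p.1)) := by
    have hm : Continuous (fun p : ℝ × ℝ => ((p.2, ξ0 + p.1) : ℝ × ℝ)) := by fun_prop
    exact hqXc.comp hm
  have hqmap2 : Continuous (fun p : ℝ × ℝ => qXi T p.1 (ξ0 + p.2)) := by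
    have hm : Continuous (fun p : ℝ × ℝ => ((p.1, ξ0 + p.2) : ℝ × ℝ)) := by fun_prop
    exact hqXc.comp hm
  -- the three parametric integrals we need, continuous in the parameter
  have hΨcont : Continuous (fun ρ => ∫ α in Icc (0:ℝ) η0, |qXi T ρ (ξ0 + α)|) :=
    contParam (f := fun α ρ => |qXi T ρ (ξ0 + α)|) hqmap.abs.continuousOn
  have hΦcont : Continuous (fun α => ∫ ρ in Icc (c - h) (c + h), |qXi T ρ (ξ0 + α)|) :=
    contParam (f := fun ρ α => |qXi T ρ (ξ0 + α)|) hqmap2.abs.continuousOn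
  have hψcont : Continuous (fun α => ∫ ρ in Icc (c - h) (c + h), (qXi T ρ (ξ0 + α)) ^ 2) :=
    contParam (f := fun ρ α => (qXi T ρ (ξ0 + α)) ^ 2) (hqmap2.pow 2).continuousOn
  have hΦnn : ∀ α : ℝ, 0 ≤ ∫ ρ in Icc (c - h) (c + h), |qXi T ρ (ξ0 + α)| :=
    fun α => setIntegral_nonneg measurableSet_Icc (fun ρ _ => abs_nonneg _)
  -- pointwise FTC bound
  have hpt : ∀ ρ : ℝ, |T ρ ξ0 - T ρ (ξ0 + η0)| ≤
      ∫ α in Icc (0:ℝ) η0, |qXi T ρ (ξ0 + α)| := by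
    intro ρ
    have hder : ∀ s ∈ uIcc ξ0 (ξ0 + η0), HasDerivAt (fun s => T ρ s) (qXi T ρ s) s :=
      fun s _ => qXi_hasDerivAt hT2 ρ s
    have hcont : Continuous (fun s => qXi T ρ s) :=
      hqXc.comp (continuous_const.prodMk continuous_id)
    have hFTC : ∫ s in ξ0..(ξ0 + η0), qXi T ρ s = T ρ (ξ0 + η0) - T ρ ξ0 :=
      intervalIntegral.integral_eq_sub_of_hasDerivAt hder (hcont.intervalIntegrable _ _)
    have h1 : |T ρ ξ0 - T ρ (ξ0 + η0)| = |∫ s in ξ0..(ξ0 + η0), qXi T ρ s| := by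
      rw [hFTC, abs_sub_comm]
    rw [h1]
    have h2 : |∫ s in ξ0..(ξ0 + η0), qXi T ρ s| ≤ ∫ s in ξ0..(ξ0 + η0), |qXi T ρ s| :=
      intervalIntegral.abs_integral_le_integral_abs (by linarith)
    have h3 := intervalIntegral.integral_comp_add_left
      (a := (0:ℝ)) (b := η0) (fun s => |qXi T ρ s|) ξ0
    rw [add_zero] at h3
    have h4 : (∫ α in (0:ℝ)..η0, |qXi T ρ (ξ0 + α)|) =
        ∫ α in Icc (0:ℝ) η0, |qXi T ρ (ξ0 + α)| := by
      rw [intervalIntegral.integral_of_le hη0nn, ← integral_Icc_eq_integral_Ioc]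
    rw [← h4, h3]
    exact h2
  -- integrability of Ψ
  have hΨint : IntegrableOn (fun ρ => ∫ α in Icc (0:ℝ) η0, |qXi T ρ (ξ0 + α)|)
      (Icc (c - h) (c + h)) :=
    ContinuousOn.integrableOn_compact isCompact_Icc hΨcont.continuousOn
  -- drop estimate
  have hdrop : ((θ4 - θ1) / 3) * F ≤ M * ∫ ρ in Icc (c - h) (c + h),
      ∫ α in Icc (0:ℝ) η0, |qXi T ρ (ξ0 + α)| := by
    have hsub : (∫ ρ in Icc (c - h) (c + h), k ρ * T ρ ξ0) -
        (∫ ρ in Icc (c - h) (c + h), k ρ * T ρ (ξ0 + η0)) =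
        ∫ ρ in Icc (c - h) (c + h), (k ρ * T ρ ξ0 - k ρ * T ρ (ξ0 + η0)) :=
      (integral_sub (hkT_int ξ0) (hkT_int (ξ0 + η0))).symm
    have heq : ((θ4 - θ1) / 3) * F =
        ∫ ρ in Icc (c - h) (c + h), (k ρ * T ρ ξ0 - k ρ * T ρ (ξ0 + η0)) := by
      rw [← hsub, havg0, hgη0]; ring
    rw [heq, ← integral_const_mul]
    apply setIntegral_mono_on ((hkT_int ξ0).sub (hkT_int (ξ0 + η0)))
      (hΨint.const_mul M) measurableSet_Icc
    intro ρ hρ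
    have hk1 := (hk0 ρ hρ).1
    have hk2 := (hk0 ρ hρ).2
    have hΨ0 : 0 ≤ ∫ α in Icc (0:ℝ) η0, |qXi T ρ (ξ0 + α)| :=
      setIntegral_nonneg measurableSet_Icc (fun α _ => abs_nonneg _)
    show k ρ * T ρ ξ0 - k ρ * T ρ (ξ0 + η0) ≤
      M * ∫ α in Icc (0:ℝ) η0, |qXi T ρ (ξ0 + α)|
    have hd1 : k ρ * T ρ ξ0 - k ρ * T ρ (ξ0 + η0) = k ρ * (T ρ ξ0 - T ρ (ξ0 + η0)) := by
      ring
    rw [hd1]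
    calc k ρ * (T ρ ξ0 - T ρ (ξ0 + η0)) ≤ k ρ * |T ρ ξ0 - T ρ (ξ0 + η0)| :=
        mul_le_mul_of_nonneg_left (le_abs_self _) hk1
      _ ≤ k ρ * ∫ α in Icc (0:ℝ) η0, |qXi T ρ (ξ0 + α)| :=
        mul_le_mul_of_nonneg_left (hpt ρ) hk1
      _ ≤ M * ∫ α in Icc (0:ℝ) η0, |qXi T ρ (ξ0 + α)| :=
        mul_le_mul_of_nonneg_right hk2 hΨ0
  -- Fubini
  have hswap : (∫ ρ in Icc (c - h) (c + h), ∫ α in Icc (0:ℝ) η0, |qXi T ρ (ξ0 + α)|) =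
      ∫ α in Icc (0:ℝ) η0, ∫ ρ in Icc (c - h) (c + h), |qXi T ρ (ξ0 + α)| := by
    have hint : Integrable (Function.uncurry fun ρ α => |qXi T ρ (ξ0 + α)|)
        ((volume.restrict (Icc (c - h) (c + h))).prod (volume.restrict (Icc (0:ℝ) η0))) := by
      rw [Measure.prod_restrict, ← Measure.volume_eq_prod]
      exact ContinuousOn.integrableOn_compact (isCompact_Icc.prod isCompact_Icc)
        hqmap2.abs.continuousOn
    exact integral_integral_swap hint
  -- lower bound for F
  have hFlb : M * h / 4 ≤ F := by
    have hsub2 : Icc (c - h/2) (c + h/2) ⊆ Icc (c - h) (c + h) :=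
      Icc_subset_Icc (by linarith) (by linarith)
    have hstep1 : (∫ ρ in Icc (c - h/2) (c + h/2), k ρ) ≤ ∫ ρ in Icc (c - h) (c + h), k ρ := by
      apply setIntegral_mono_set hk_int
      · filter_upwards [ae_restrict_mem measurableSet_Icc] with ρ hρ
        exact (hk0 ρ hρ).1
      · exact hsub2.eventuallyLE
    have hstep2 : M / 4 * h ≤ ∫ ρ in Icc (c - h/2) (c + h/2), k ρ := by
      have hconst : (∫ _ρ in Icc (c - h/2) (c + h/2), (M/4 : ℝ)) = M / 4 * h := by
        rw [setIntegral_const, Real.volume_real_Icc_of_le (by linarith), smul_eq_mul]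
        ring
      rw [← hconst]
      apply setIntegral_mono_on
        (integrableOn_const measure_Icc_lt_top.ne)
        (hk_int.mono_set hsub2) measurableSet_Icc
      intro ρ hρ
      have hker : (1:ℝ)/2 ≤ kerG h (ρ - c) := by
        have habs : |ρ - c| ≤ h / 2 := by
          rw [abs_le]; constructor <;> [linarith [hρ.1]; linarith [hρ.2]]
        have hfr : |ρ - c| / h ≤ 1 / 2 := by
          rw [div_le_iff₀ hh]; linarith
        have hge : (1:ℝ)/2 ≤ 1 - |ρ - c| / h := by linarith
        exact le_trans hge (le_max_left _ _)
      have hq1 := (hq ρ (hsub2 hρ)).1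
      rw [hkdef]
      calc M / 4 = (1/2) * (M/2) := by ring
        _ ≤ kerG h (ρ - c) * q ρ :=
          mul_le_mul hker hq1 (by linarith) (by linarith)
    rw [hFdef]
    linarith
  -- lower bound for the L¹ mass W
  have hW_lb : (θ4 - θ1) * h / 12 ≤
      ∫ α in Icc (0:ℝ) η0, ∫ ρ in Icc (c - h) (c + h), |qXi T ρ (ξ0 + α)| := by
    rw [← hswap]
    have h1 : ((θ4 - θ1) / 3) * (M * h / 4) ≤ ((θ4 - θ1) / 3) * F :=
      mul_le_mul_of_nonneg_left hFlb (by linarith)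
    have h2 : M * ((θ4 - θ1) * h / 12) ≤ M * ∫ ρ in Icc (c - h) (c + h),
        ∫ α in Icc (0:ℝ) η0, |qXi T ρ (ξ0 + α)| := by
      have e : M * ((θ4 - θ1) * h / 12) = ((θ4 - θ1) / 3) * (M * h / 4) := by ring
      rw [e]
      exact le_trans h1 hdrop
    exact le_of_mul_le_mul_left h2 hM
  -- Cauchy–Schwarz in α
  have hΦint : IntegrableOn (fun α => ∫ ρ in Icc (c - h) (c + h), |qXi T ρ (ξ0 + α)|)
      (Icc (0:ℝ) η0) := ContinuousOn.integrableOn_compact isCompact_Icc hΦcont.continuousOn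
  have hΦsqint : IntegrableOn
      (fun α => (∫ ρ in Icc (c - h) (c + h), |qXi T ρ (ξ0 + α)|) ^ 2)
      (Icc (0:ℝ) η0) := ContinuousOn.integrableOn_compact isCompact_Icc (hΦcont.pow 2).continuousOn
  have hCS1 : (∫ α in Icc (0:ℝ) η0, ∫ ρ in Icc (c - h) (c + h), |qXi T ρ (ξ0 + α)|) ^ 2 ≤
      η0 * ∫ α in Icc (0:ℝ) η0,
        (∫ ρ in Icc (c - h) (c + h), |qXi T ρ (ξ0 + α)|) ^ 2 := by
    have := sq_setIntegral_le (a := (0:ℝ)) (b := η0) hη0nn hΦnn hΦint hΦsqint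
    rwa [sub_zero] at this
  -- Cauchy–Schwarz in ρ, pointwise in α
  have hCS2 : ∀ α : ℝ, (∫ ρ in Icc (c - h) (c + h), |qXi T ρ (ξ0 + α)|) ^ 2 ≤
      (2 * h) * ∫ ρ in Icc (c - h) (c + h), (qXi T ρ (ξ0 + α)) ^ 2 := by
    intro α
    have hcontρ : Continuous (fun ρ => qXi T ρ (ξ0 + α)) := hqmap2.comp (hmapρ α)
    have hint1 : IntegrableOn (fun ρ => |qXi T ρ (ξ0 + α)|) (Icc (c - h) (c + h)) :=
      ContinuousOn.integrableOn_compact isCompact_Icc hcontρ.abs.continuousOn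
    have hint2 : IntegrableOn (fun ρ => |qXi T ρ (ξ0 + α)| ^ 2) (Icc (c - h) (c + h)) :=
      ContinuousOn.integrableOn_compact isCompact_Icc (hcontρ.abs.pow 2).continuousOn
    have := sq_setIntegral_le (a := c - h) (b := c + h) (by linarith)
      (fun ρ => abs_nonneg (qXi T ρ (ξ0 + α))) hint1 hint2
    have heq : (∫ ρ in Icc (c - h) (c + h), |qXi T ρ (ξ0 + α)| ^ 2) =
        ∫ ρ in Icc (c - h) (c + h), (qXi T ρ (ξ0 + α)) ^ 2 := by
      apply setIntegral_congr_fun measurableSet_Icc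
      intro ρ _
      exact sq_abs _
    rw [heq] at this
    have he : c + h - (c - h) = 2 * h := by ring
    rw [he] at this
    exact this
  -- combine the two Cauchy–Schwarz steps
  have hψint : IntegrableOn (fun α => ∫ ρ in Icc (c - h) (c + h), (qXi T ρ (ξ0 + α)) ^ 2)
      (Icc (0:ℝ) η0) := ContinuousOn.integrableOn_compact isCompact_Icc hψcont.continuousOn
  have hCS3 : (∫ α in Icc (0:ℝ) η0, ∫ ρ in Icc (c - h) (c + h), |qXi T ρ (ξ0 + α)|) ^ 2 ≤
      η0 * (2 * h * ∫ α in Icc (0:ℝ) η0,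
        ∫ ρ in Icc (c - h) (c + h), (qXi T ρ (ξ0 + α)) ^ 2) := by
    have hmono : (∫ α in Icc (0:ℝ) η0,
        (∫ ρ in Icc (c - h) (c + h), |qXi T ρ (ξ0 + α)|) ^ 2) ≤
        ∫ α in Icc (0:ℝ) η0, (2 * h) * ∫ ρ in Icc (c - h) (c + h),
          (qXi T ρ (ξ0 + α)) ^ 2 := by
      apply setIntegral_mono_on hΦsqint (hψint.const_mul _) measurableSet_Icc
      intro α _
      exact hCS2 α
    rw [integral_const_mul] at hmono
    calc (∫ α in Icc (0:ℝ) η0, ∫ ρ in Icc (c - h) (c + h), |qXi T ρ (ξ0 + α)|) ^ 2 ≤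
        η0 * ∫ α in Icc (0:ℝ) η0,
          (∫ ρ in Icc (c - h) (c + h), |qXi T ρ (ξ0 + α)|) ^ 2 := hCS1
      _ ≤ η0 * (2 * h * ∫ α in Icc (0:ℝ) η0,
          ∫ ρ in Icc (c - h) (c + h), (qXi T ρ (ξ0 + α)) ^ 2) :=
        mul_le_mul_of_nonneg_left hmono hη0nn
  -- pointwise energy bound
  have hptE : ∀ ρ ∈ Icc (c - h) (c + h), ∀ ξ : ℝ,
      (qXi T ρ ξ) ^ 2 ≤ C0 * (Ea ρ ξ * Eb ρ ξ * gradSq T Ea Eb ρ ξ) := by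
    intro ρ hρ ξ
    obtain ⟨hA, hB⟩ := hElb ρ hρ ξ
    obtain ⟨hw1, hw2⟩ := hωb ρ hρ ξ
    have hA0 : 0 < Ea ρ ξ := lt_of_lt_of_le hC0inv hA
    have hB0 : 0 < Eb ρ ξ := lt_of_lt_of_le hC0inv hB
    have hBle : Eb ρ ξ ≤ C0 * Ea ρ ξ := by
      unfold omg at hw2
      rw [div_le_iff₀ hA0] at hw2
      linarith
    have hgq : gradSq T Ea Eb ρ ξ = (qR T ρ ξ / Ea ρ ξ) ^ 2 + (qXi T ρ ξ / Eb ρ ξ) ^ 2 := rfl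
    have e : (qXi T ρ ξ / Eb ρ ξ) ^ 2 = (qXi T ρ ξ) ^ 2 / (Eb ρ ξ) ^ 2 := div_pow _ _ _
    rw [hgq, e]
    have key : (qXi T ρ ξ) ^ 2 ≤
        C0 * (Ea ρ ξ * Eb ρ ξ * ((qXi T ρ ξ) ^ 2 / (Eb ρ ξ) ^ 2)) := by
      have e2 : C0 * (Ea ρ ξ * Eb ρ ξ * ((qXi T ρ ξ) ^ 2 / (Eb ρ ξ) ^ 2)) =
          (C0 * Ea ρ ξ / Eb ρ ξ) * (qXi T ρ ξ) ^ 2 := by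
        field_simp
      rw [e2]
      have h1 : 1 ≤ C0 * Ea ρ ξ / Eb ρ ξ := (one_le_div hB0).mpr hBle
      have h2 := mul_le_mul_of_nonneg_right h1 (sq_nonneg (qXi T ρ ξ))
      rw [one_mul] at h2
      exact h2
    have hrest : 0 ≤ C0 * (Ea ρ ξ * Eb ρ ξ * (qR T ρ ξ / Ea ρ ξ) ^ 2) := by
      have := sq_nonneg (qR T ρ ξ / Ea ρ ξ)
      have h2 : 0 ≤ Ea ρ ξ * Eb ρ ξ := mul_nonneg hA0.le hB0.le
      positivity
    have expand : C0 * (Ea ρ ξ * Eb ρ ξ *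
        ((qR T ρ ξ / Ea ρ ξ) ^ 2 + (qXi T ρ ξ) ^ 2 / (Eb ρ ξ) ^ 2)) =
        C0 * (Ea ρ ξ * Eb ρ ξ * (qR T ρ ξ / Ea ρ ξ) ^ 2) +
        C0 * (Ea ρ ξ * Eb ρ ξ * ((qXi T ρ ξ) ^ 2 / (Eb ρ ξ) ^ 2)) := by ring
    rw [expand]
    linarith
  -- the ξ-slice of the energy integrand is continuous on the tube section
  have hVslice : ∀ ξ : ℝ, ContinuousOn
      (fun ρ => Ea ρ ξ * Eb ρ ξ * gradSq T Ea Eb ρ ξ) (Icc (c - h) (c + h)) := by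
    intro ξ
    exact hVcontOn.comp (Continuous.continuousOn (hmapρ ξ))
      (fun ρ hρ => mk_mem_prod hρ (mem_univ _))
  -- energy comparison, pointwise in α
  have hψleθ : ∀ α : ℝ, (∫ ρ in Icc (c - h) (c + h), (qXi T ρ (ξ0 + α)) ^ 2) ≤
      C0 * ∫ ρ in Icc (c - h) (c + h),
        Ea ρ (ξ0 + α) * Eb ρ (ξ0 + α) * gradSq T Ea Eb ρ (ξ0 + α) := by
    intro α
    rw [← integral_const_mul]
    have hcontρ : Continuous (fun ρ => qXi T ρ (ξ0 + α)) := hqmap2.comp (hmapρ α)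
    apply setIntegral_mono_on
      (ContinuousOn.integrableOn_compact isCompact_Icc (hcontρ.pow 2).continuousOn)
      (ContinuousOn.integrableOn_compact isCompact_Icc
        ((continuousOn_const.mul (hVslice (ξ0 + α))))) measurableSet_Icc
    intro ρ hρ
    exact hptE ρ hρ (ξ0 + α)
  -- energy comparison integrated in α, then translated to a ξ-integral
  have hθvm : Continuous (fun α : ℝ => ∫ ρ in Icc (c - h) (c + h),
      Ea ρ (ξ0 + α) * Eb ρ (ξ0 + α) * gradSq T Ea Eb ρ (ξ0 + α)) := by
    have hm : Continuous (fun α : ℝ => ξ0 + α) := by fun_prop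
    exact hθvcont.comp hm
  have hP'le : (∫ α in Icc (0:ℝ) η0, ∫ ρ in Icc (c - h) (c + h), (qXi T ρ (ξ0 + α)) ^ 2) ≤
      C0 * ∫ α in Icc (0:ℝ) η0, ∫ ρ in Icc (c - h) (c + h),
        Ea ρ (ξ0 + α) * Eb ρ (ξ0 + α) * gradSq T Ea Eb ρ (ξ0 + α) := by
    rw [← integral_const_mul]
    apply setIntegral_mono_on hψint
      (ContinuousOn.integrableOn_compact isCompact_Icc
        (continuousOn_const.mul hθvm.continuousOn)) measurableSet_Icc
    intro α _
    exact hψleθ α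
  have htrans : (∫ α in Icc (0:ℝ) η0, ∫ ρ in Icc (c - h) (c + h),
      Ea ρ (ξ0 + α) * Eb ρ (ξ0 + α) * gradSq T Ea Eb ρ (ξ0 + α)) =
      ∫ ξ in Icc ξ0 (ξ0 + η0), ∫ ρ in Icc (c - h) (c + h),
        Ea ρ ξ * Eb ρ ξ * gradSq T Ea Eb ρ ξ := by
    have h1 := intervalIntegral.integral_comp_add_left (a := (0:ℝ)) (b := η0)
      (fun ξ => ∫ ρ in Icc (c - h) (c + h), Ea ρ ξ * Eb ρ ξ * gradSq T Ea Eb ρ ξ) ξ0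
    rw [add_zero] at h1
    rw [integral_Icc_eq_integral_Ioc, ← intervalIntegral.integral_of_le hη0nn, h1,
      intervalIntegral.integral_of_le (by linarith : ξ0 ≤ ξ0 + η0),
      ← integral_Icc_eq_integral_Ioc]
  have hstrip : (∫ ξ in Icc ξ0 (ξ0 + η0), ∫ ρ in Icc (c - h) (c + h),
      Ea ρ ξ * Eb ρ ξ * gradSq T Ea Eb ρ ξ) ≤
      ∫ ξ in Icc ξ0 ξ1, ∫ ρ in Icc (c - h) (c + h),
        Ea ρ ξ * Eb ρ ξ * gradSq T Ea Eb ρ ξ := by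
    apply setIntegral_mono_set
      (ContinuousOn.integrableOn_compact isCompact_Icc hθvcont.continuousOn)
      (Filter.Eventually.of_forall (fun ξ => hθvnn ξ))
      (HasSubset.Subset.eventuallyLE (Icc_subset_Icc le_rfl (by linarith : ξ0 + η0 ≤ ξ1)))
  -- final energy bound for W²
  have hCSfinal : (∫ α in Icc (0:ℝ) η0, ∫ ρ in Icc (c - h) (c + h),
      |qXi T ρ (ξ0 + α)|) ^ 2 ≤ 2 * h * η0 * (C0 *
      ∫ ξ in Icc ξ0 ξ1, ∫ ρ in Icc (c - h) (c + h),
        Ea ρ ξ * Eb ρ ξ * gradSq T Ea Eb ρ ξ) := by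
    have h3 : (∫ α in Icc (0:ℝ) η0, ∫ ρ in Icc (c - h) (c + h), (qXi T ρ (ξ0 + α)) ^ 2) ≤
        C0 * ∫ ξ in Icc ξ0 ξ1, ∫ ρ in Icc (c - h) (c + h),
          Ea ρ ξ * Eb ρ ξ * gradSq T Ea Eb ρ ξ := by
      calc (∫ α in Icc (0:ℝ) η0, ∫ ρ in Icc (c - h) (c + h), (qXi T ρ (ξ0 + α)) ^ 2) ≤
          C0 * ∫ α in Icc (0:ℝ) η0, ∫ ρ in Icc (c - h) (c + h),
            Ea ρ (ξ0 + α) * Eb ρ (ξ0 + α) * gradSq T Ea Eb ρ (ξ0 + α) := hP'le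
        _ = C0 * ∫ ξ in Icc ξ0 (ξ0 + η0), ∫ ρ in Icc (c - h) (c + h),
            Ea ρ ξ * Eb ρ ξ * gradSq T Ea Eb ρ ξ := by rw [htrans]
        _ ≤ C0 * ∫ ξ in Icc ξ0 ξ1, ∫ ρ in Icc (c - h) (c + h),
            Ea ρ ξ * Eb ρ ξ * gradSq T Ea Eb ρ ξ :=
          mul_le_mul_of_nonneg_left hstrip hC0.le
    have h4 : η0 * (2 * h * ∫ α in Icc (0:ℝ) η0, ∫ ρ in Icc (c - h) (c + h),
        (qXi T ρ (ξ0 + α)) ^ 2) ≤ 2 * h * η0 * (C0 *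
        ∫ ξ in Icc ξ0 ξ1, ∫ ρ in Icc (c - h) (c + h),
          Ea ρ ξ * Eb ρ ξ * gradSq T Ea Eb ρ ξ) := by
      have h5 : 0 ≤ 2 * h * η0 := by positivity
      calc η0 * (2 * h * ∫ α in Icc (0:ℝ) η0, ∫ ρ in Icc (c - h) (c + h),
          (qXi T ρ (ξ0 + α)) ^ 2) =
          (2 * h * η0) * ∫ α in Icc (0:ℝ) η0, ∫ ρ in Icc (c - h) (c + h),
            (qXi T ρ (ξ0 + α)) ^ 2 := by ring
        _ ≤ (2 * h * η0) * (C0 * ∫ ξ in Icc ξ0 ξ1, ∫ ρ in Icc (c - h) (c + h),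
            Ea ρ ξ * Eb ρ ξ * gradSq T Ea Eb ρ ξ) := mul_le_mul_of_nonneg_left h3 h5
    exact le_trans hCS3 h4
  -- bound for the triple integral
  have hLHSinner : ∀ δ ∈ Icc (0:ℝ) h, ∀ α : ℝ,
      |∫ ρ in Icc (c - δ) (c + δ), (omg Ea Eb ρ (ξ0 + α))⁻¹ * qXi T ρ (ξ0 + α)| ≤
      C0 * ∫ ρ in Icc (c - h) (c + h), |qXi T ρ (ξ0 + α)| := by
    intro δ hδ α
    have hsubδ : Icc (c - δ) (c + δ) ⊆ Icc (c - h) (c + h) :=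
      Icc_subset_Icc (by linarith [hδ.2]) (by linarith [hδ.2])
    have hcontρ : Continuous (fun ρ => qXi T ρ (ξ0 + α)) := hqmap2.comp (hmapρ α)
    have hwinv : ∀ ρ ∈ Icc (c - h) (c + h), |(omg Ea Eb ρ (ξ0 + α))⁻¹| ≤ C0 := by
      intro ρ hρ
      obtain ⟨hw1, hw2⟩ := hωb ρ hρ (ξ0 + α)
      have hwpos : 0 < omg Ea Eb ρ (ξ0 + α) := lt_of_lt_of_le hC0inv hw1
      rw [abs_of_pos (inv_pos.mpr hwpos)]
      have hinv1 : (omg Ea Eb ρ (ξ0 + α))⁻¹ ≤ (C0⁻¹)⁻¹ := inv_anti₀ hC0inv hw1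
      rw [inv_inv] at hinv1
      exact hinv1
    have hcont1 : ContinuousOn
        (fun ρ => (omg Ea Eb ρ (ξ0 + α))⁻¹ * qXi T ρ (ξ0 + α)) (Icc (c - h) (c + h)) := by
      have hEas : ContinuousOn (fun ρ => Ea ρ (ξ0 + α)) (Icc (c - h) (c + h)) :=
        (hEac.comp (hmapρ (ξ0 + α))).continuousOn
      have hEbs : ContinuousOn (fun ρ => Eb ρ (ξ0 + α)) (Icc (c - h) (c + h)) :=
        (hEbc.comp (hmapρ (ξ0 + α))).continuousOn
      have hEane : ∀ ρ ∈ Icc (c - h) (c + h), Ea ρ (ξ0 + α) ≠ 0 :=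
        fun ρ hρ => ne_of_gt (lt_of_lt_of_le hC0inv (hElb ρ hρ (ξ0 + α)).1)
      have hwne : ∀ ρ ∈ Icc (c - h) (c + h), omg Ea Eb ρ (ξ0 + α) ≠ 0 :=
        fun ρ hρ => ne_of_gt (lt_of_lt_of_le hC0inv (hωb ρ hρ (ξ0 + α)).1)
      have homgc : ContinuousOn (fun ρ => omg Ea Eb ρ (ξ0 + α)) (Icc (c - h) (c + h)) := by
        unfold omg
        exact hEbs.div hEas hEane
      exact (homgc.inv₀ hwne).mul hcontρ.continuousOn
    have st1 : |∫ ρ in Icc (c - δ) (c + δ), (omg Ea Eb ρ (ξ0 + α))⁻¹ * qXi T ρ (ξ0 + α)| ≤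
        ∫ ρ in Icc (c - δ) (c + δ), |(omg Ea Eb ρ (ξ0 + α))⁻¹ * qXi T ρ (ξ0 + α)| := by
      have hni := norm_integral_le_integral_norm
        (μ := volume.restrict (Icc (c - δ) (c + δ)))
        (fun ρ => (omg Ea Eb ρ (ξ0 + α))⁻¹ * qXi T ρ (ξ0 + α))
      simpa only [Real.norm_eq_abs] using hni
    have st2 : (∫ ρ in Icc (c - δ) (c + δ), |(omg Ea Eb ρ (ξ0 + α))⁻¹ * qXi T ρ (ξ0 + α)|) ≤
        ∫ ρ in Icc (c - δ) (c + δ), C0 * |qXi T ρ (ξ0 + α)| := by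
      apply setIntegral_mono_on
        (ContinuousOn.integrableOn_compact isCompact_Icc
          ((hcont1.mono hsubδ).abs))
        (ContinuousOn.integrableOn_compact isCompact_Icc
          (continuousOn_const.mul hcontρ.abs.continuousOn)) measurableSet_Icc
      intro ρ hρ
      rw [abs_mul]
      exact mul_le_mul_of_nonneg_right (hwinv ρ (hsubδ hρ)) (abs_nonneg _)
    have st3 : (∫ ρ in Icc (c - δ) (c + δ), C0 * |qXi T ρ (ξ0 + α)|) ≤
        ∫ ρ in Icc (c - h) (c + h), C0 * |qXi T ρ (ξ0 + α)| := by
      apply setIntegral_mono_set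
        (ContinuousOn.integrableOn_compact isCompact_Icc
          (continuousOn_const.mul hcontρ.abs.continuousOn))
        (Filter.Eventually.of_forall (fun ρ => mul_nonneg hC0.le (abs_nonneg _)))
        (HasSubset.Subset.eventuallyLE hsubδ)
    have st4 : (∫ ρ in Icc (c - h) (c + h), C0 * |qXi T ρ (ξ0 + α)|) =
        C0 * ∫ ρ in Icc (c - h) (c + h), |qXi T ρ (ξ0 + α)| := integral_const_mul _ _
    rw [← st4]
    exact le_trans st1 (le_trans st2 st3)
  have hmid : ∀ δ ∈ Icc (0:ℝ) h,
      |∫ α in Icc (0:ℝ) η0, ∫ ρ in Icc (c - δ) (c + δ),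
        (omg Ea Eb ρ (ξ0 + α))⁻¹ * qXi T ρ (ξ0 + α)| ≤
      C0 * ∫ α in Icc (0:ℝ) η0, ∫ ρ in Icc (c - h) (c + h), |qXi T ρ (ξ0 + α)| := by
    intro δ hδ
    have st1 : |∫ α in Icc (0:ℝ) η0, ∫ ρ in Icc (c - δ) (c + δ),
        (omg Ea Eb ρ (ξ0 + α))⁻¹ * qXi T ρ (ξ0 + α)| ≤
        ∫ α in Icc (0:ℝ) η0, |∫ ρ in Icc (c - δ) (c + δ),
          (omg Ea Eb ρ (ξ0 + α))⁻¹ * qXi T ρ (ξ0 + α)| := by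
      have hni := norm_integral_le_integral_norm
        (μ := volume.restrict (Icc (0:ℝ) η0))
        (fun α => ∫ ρ in Icc (c - δ) (c + δ),
          (omg Ea Eb ρ (ξ0 + α))⁻¹ * qXi T ρ (ξ0 + α))
      simpa only [Real.norm_eq_abs] using hni
    have st2 : (∫ α in Icc (0:ℝ) η0, |∫ ρ in Icc (c - δ) (c + δ),
        (omg Ea Eb ρ (ξ0 + α))⁻¹ * qXi T ρ (ξ0 + α)|) ≤
        ∫ α in Icc (0:ℝ) η0, C0 * ∫ ρ in Icc (c - h) (c + h), |qXi T ρ (ξ0 + α)| := by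
      apply integral_mono_of_nonneg
        (Filter.Eventually.of_forall (fun α => abs_nonneg _))
        ((ContinuousOn.integrableOn_compact isCompact_Icc
          (continuousOn_const.mul hΦcont.continuousOn)))
        (Filter.Eventually.of_forall (fun α => hLHSinner δ hδ α))
    have st3 : (∫ α in Icc (0:ℝ) η0, C0 * ∫ ρ in Icc (c - h) (c + h),
        |qXi T ρ (ξ0 + α)|) =
        C0 * ∫ α in Icc (0:ℝ) η0, ∫ ρ in Icc (c - h) (c + h), |qXi T ρ (ξ0 + α)| :=
      integral_const_mul _ _
    rw [← st3]
    exact le_trans st1 st2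
  have houter : |∫ δ in Icc (0:ℝ) h, ∫ α in Icc (0:ℝ) η0, ∫ ρ in Icc (c - δ) (c + δ),
      (omg Ea Eb ρ (ξ0 + α))⁻¹ * qXi T ρ (ξ0 + α)| ≤
      h * (C0 * ∫ α in Icc (0:ℝ) η0, ∫ ρ in Icc (c - h) (c + h), |qXi T ρ (ξ0 + α)|) := by
    have st1 : |∫ δ in Icc (0:ℝ) h, ∫ α in Icc (0:ℝ) η0, ∫ ρ in Icc (c - δ) (c + δ),
        (omg Ea Eb ρ (ξ0 + α))⁻¹ * qXi T ρ (ξ0 + α)| ≤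
        ∫ δ in Icc (0:ℝ) h, |∫ α in Icc (0:ℝ) η0, ∫ ρ in Icc (c - δ) (c + δ),
          (omg Ea Eb ρ (ξ0 + α))⁻¹ * qXi T ρ (ξ0 + α)| := by
      have hni := norm_integral_le_integral_norm
        (μ := volume.restrict (Icc (0:ℝ) h))
        (fun δ => ∫ α in Icc (0:ℝ) η0, ∫ ρ in Icc (c - δ) (c + δ),
          (omg Ea Eb ρ (ξ0 + α))⁻¹ * qXi T ρ (ξ0 + α))
      simpa only [Real.norm_eq_abs] using hni
    have st2 : (∫ δ in Icc (0:ℝ) h, |∫ α in Icc (0:ℝ) η0, ∫ ρ in Icc (c - δ) (c + δ),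
        (omg Ea Eb ρ (ξ0 + α))⁻¹ * qXi T ρ (ξ0 + α)|) ≤
        ∫ _δ in Icc (0:ℝ) h, (C0 * ∫ α in Icc (0:ℝ) η0,
          ∫ ρ in Icc (c - h) (c + h), |qXi T ρ (ξ0 + α)|) := by
      apply integral_mono_of_nonneg
        (Filter.Eventually.of_forall (fun δ => abs_nonneg _))
        (by exact integrableOn_const measure_Icc_lt_top.ne)
        ?_
      filter_upwards [ae_restrict_mem measurableSet_Icc] with δ hδ
      exact hmid δ hδ
    have st3 : (∫ _δ in Icc (0:ℝ) h, (C0 * ∫ α in Icc (0:ℝ) η0,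
        ∫ ρ in Icc (c - h) (c + h), |qXi T ρ (ξ0 + α)|)) =
        h * (C0 * ∫ α in Icc (0:ℝ) η0, ∫ ρ in Icc (c - h) (c + h),
          |qXi T ρ (ξ0 + α)|) := by
      rw [setIntegral_const, Real.volume_real_Icc_of_le hh.le, sub_zero,
        smul_eq_mul]
    rw [← st3]
    exact le_trans st1 st2
  -- final arithmetic
  set W := ∫ α in Icc (0:ℝ) η0, ∫ ρ in Icc (c - h) (c + h), |qXi T ρ (ξ0 + α)| with hWdef
  set G := ∫ ξ in Icc ξ0 ξ1, ∫ ρ in Icc (c - h) (c + h),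
      Ea ρ ξ * Eb ρ ξ * gradSq T Ea Eb ρ ξ with hGdef
  have hGnn : 0 ≤ G := setIntegral_nonneg measurableSet_Icc (fun ξ _ => hθvnn ξ)
  have hWpos : 0 < W := lt_of_lt_of_le (by positivity) hW_lb
  have hWle : W ≤ 24 * η0 * C0 * G / (θ4 - θ1) := by
    rw [le_div_iff₀ ht]
    have h1 : W * ((θ4 - θ1) * h) ≤ 12 * (W * W) := by
      have h0 := mul_le_mul_of_nonneg_left hW_lb hWpos.le
      linarith only [h0]
    have h2 : 12 * (W * W) ≤ 12 * (2 * h * η0 * (C0 * G)) := by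
      have hsq : W * W = W ^ 2 := (sq W).symm
      rw [hsq]
      linarith only [hCSfinal]
    have h3 : h * (W * (θ4 - θ1)) ≤ h * (24 * η0 * C0 * G) := by
      linarith only [h1, h2]
    exact le_of_mul_le_mul_left h3 hh
  have hfrac : 0 ≤ κ / (η0 * h) := by positivity
  calc (κ / (η0 * h)) * |∫ δ in Icc (0 : ℝ) h, ∫ α in Icc (0 : ℝ) η0,
      ∫ ρ in Icc (c - δ) (c + δ),
        (omg Ea Eb ρ (ξ0 + α))⁻¹ * qXi T ρ (ξ0 + α)| ≤
      (κ / (η0 * h)) * (h * (C0 * W)) :=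
      mul_le_mul_of_nonneg_left houter hfrac
    _ ≤ 24 * C0 ^ 2 * (((θ4 - θ1) ^ 2)⁻¹ * κ * G) := by
      have hη0ne : η0 ≠ 0 := ne_of_gt hη0pos
      have hhne : h ≠ 0 := ne_of_gt hh
      have htne : θ4 - θ1 ≠ 0 := ne_of_gt ht
      have e1 : (κ / (η0 * h)) * (h * (C0 * W)) = κ * C0 * W / η0 := by
        field_simp
      have step1 : κ * C0 * W / η0 ≤ κ * C0 * (24 * η0 * C0 * G / (θ4 - θ1)) / η0 := by
        apply (div_le_div_iff_of_pos_right hη0pos).mpr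
        exact mul_le_mul_of_nonneg_left hWle (by positivity)
      have e2 : κ * C0 * (24 * η0 * C0 * G / (θ4 - θ1)) / η0 =
          24 * C0 ^ 2 * (κ * G / (θ4 - θ1)) := by
        field_simp
      have ht2 : (θ4 - θ1) ^ 2 ≤ θ4 - θ1 := by
        calc (θ4 - θ1) ^ 2 = (θ4 - θ1) * (θ4 - θ1) := sq (θ4 - θ1)
          _ ≤ (θ4 - θ1) * 1 := mul_le_mul_of_nonneg_left ht1.le ht.le
          _ = θ4 - θ1 := mul_one _
      have hinv : (θ4 - θ1)⁻¹ ≤ ((θ4 - θ1) ^ 2)⁻¹ :=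
        inv_anti₀ (by positivity) ht2
      have step2 : 24 * C0 ^ 2 * (κ * G / (θ4 - θ1)) ≤
          24 * C0 ^ 2 * (((θ4 - θ1) ^ 2)⁻¹ * κ * G) := by
        apply mul_le_mul_of_nonneg_left ?_ (by positivity : (0:ℝ) ≤ 24 * C0 ^ 2)
        have hkG : 0 ≤ κ * G := mul_nonneg hκ.le hGnn
        have e3 : κ * G / (θ4 - θ1) = (θ4 - θ1)⁻¹ * (κ * G) := by
          rw [div_eq_mul_inv]; ring
        have e4 : ((θ4 - θ1) ^ 2)⁻¹ * κ * G = ((θ4 - θ1) ^ 2)⁻¹ * (κ * G) := by ring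
        rw [e3, e4]
        exact mul_le_mul_of_nonneg_right hinv hkG
      rw [e1]
      calc κ * C0 * W / η0 ≤ κ * C0 * (24 * η0 * C0 * G / (θ4 - θ1)) / η0 := step1
        _ = 24 * C0 ^ 2 * (κ * G / (θ4 - θ1)) := e2
        _ ≤ 24 * C0 ^ 2 * (((θ4 - θ1) ^ 2)⁻¹ * κ * G) := step2






end
end

section
/- Let H > 0 and ρ(x,y) = H sin(x/H) sin(y/H). Then Δρ = −(2/H²) ρ, and |∇ρ(x,y)|² = sin²(x/H) + sin²(y/H) − 2ρ(x,y)²/H². Moreover, at every point (x,y) where 0 < ρ(x,y) ≤ H/2, one has |∇ρ(x,y)|² ≥ 2(ρ/H)(1 − ρ/H) ≥ ρ/H, and consequently |Δρ(x,y)| / |∇ρ(x,y)|² ≤ 2/H. -/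
set_option autoImplicit false

open Real Set

noncomputable section

/-- the normalized stream function `ρ(x,y) = H sin(x/H) sin(y/H)`. -/
def rhoFn (H x y : ℝ) : ℝ := H * Real.sin (x / H) * Real.sin (y / H)

/-- the Laplacian of `ρ`. -/
def lapRho (H x y : ℝ) : ℝ :=
  deriv (fun s => deriv (fun s' => rhoFn H s' y) s) x +
  deriv (fun s => deriv (fun s' => rhoFn H x s') s) y

/-- the squared gradient of `ρ`. -/
def gradRhoSq (H x y : ℝ) : ℝ :=
  (deriv (fun s => rhoFn H s y) x) ^ 2 + (deriv (fun s => rhoFn H x s) y) ^ 2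

lemma hasDerivAt_sin_div (H : ℝ) (hH : H ≠ 0) (x : ℝ) :
    HasDerivAt (fun s : ℝ => Real.sin (s / H)) (Real.cos (x / H) * (1 / H)) x := by
  have h1 : HasDerivAt (fun s : ℝ => s / H) (1 / H) x := by
    simpa using (hasDerivAt_id x).div_const H
  exact (Real.hasDerivAt_sin (x / H)).comp x h1

lemma hasDerivAt_rho_x (H : ℝ) (hH : H ≠ 0) (x y : ℝ) :
    HasDerivAt (fun s => rhoFn H s y) (Real.cos (x / H) * Real.sin (y / H)) x := by
  have h := ((hasDerivAt_sin_div H hH x).const_mul H).mul_const (Real.sin (y / H))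
  exact h.congr_deriv (by field_simp)

lemma hasDerivAt_rho_y (H : ℝ) (hH : H ≠ 0) (x y : ℝ) :
    HasDerivAt (fun s => rhoFn H x s) (Real.sin (x / H) * Real.cos (y / H)) y := by
  have h := ((hasDerivAt_sin_div H hH y).const_mul (H * Real.sin (x / H)))
  have h' : HasDerivAt (fun s => rhoFn H x s)
      (H * Real.sin (x / H) * (Real.cos (y / H) * (1 / H))) y := by
    exact h
  convert h' using 1
  field_simp
  try ring

lemma deriv_rho_x (H : ℝ) (hH : H ≠ 0) (x y : ℝ) :
    deriv (fun s => rhoFn H s y) x = Real.cos (x / H) * Real.sin (y / H) :=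
  (hasDerivAt_rho_x H hH x y).deriv

lemma deriv_rho_y (H : ℝ) (hH : H ≠ 0) (x y : ℝ) :
    deriv (fun s => rhoFn H x s) y = Real.sin (x / H) * Real.cos (y / H) :=
  (hasDerivAt_rho_y H hH x y).deriv

lemma hasDerivAt_cos_div (H : ℝ) (hH : H ≠ 0) (x : ℝ) :
    HasDerivAt (fun s : ℝ => Real.cos (s / H)) (-Real.sin (x / H) * (1 / H)) x := by
  have h1 : HasDerivAt (fun s : ℝ => s / H) (1 / H) x := by
    simpa using (hasDerivAt_id x).div_const H
  exact (Real.hasDerivAt_cos (x / H)).comp x h1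

/-- pointwise estimates on the stream function of the cellular
flow: `Δρ = -(2/H²)ρ`, the explicit formula for `|∇ρ|²`, and the lower bounds for
`|∇ρ|²` in the region `0 < ρ ≤ H/2`. -/
theorem cellular_stream_function_estimates (H : ℝ) (hH : 0 < H) (x y : ℝ) :
    lapRho H x y = -(2 / H ^ 2) * rhoFn H x y ∧
    gradRhoSq H x y =
      Real.sin (x / H) ^ 2 + Real.sin (y / H) ^ 2 - 2 * rhoFn H x y ^ 2 / H ^ 2 ∧
    (0 < rhoFn H x y → rhoFn H x y ≤ H / 2 →
      2 * (rhoFn H x y / H) * (1 - rhoFn H x y / H) ≤ gradRhoSq H x y ∧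
      rhoFn H x y / H ≤ 2 * (rhoFn H x y / H) * (1 - rhoFn H x y / H) ∧
      |lapRho H x y| / gradRhoSq H x y ≤ 2 / H) := by
  have hH0 : H ≠ 0 := ne_of_gt hH
  -- second derivatives
  have hlap : lapRho H x y = -(2 / H ^ 2) * rhoFn H x y := by
    have hx2 : deriv (fun s => deriv (fun s' => rhoFn H s' y) s) x
        = -Real.sin (x / H) * (1 / H) * Real.sin (y / H) := by
      have : (fun s => deriv (fun s' => rhoFn H s' y) s)
          = fun s => Real.cos (s / H) * Real.sin (y / H) := by
        funext s; exact deriv_rho_x H hH0 s y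
      rw [this]
      exact ((hasDerivAt_cos_div H hH0 x).mul_const (Real.sin (y / H))).deriv
    have hy2 : deriv (fun s => deriv (fun s' => rhoFn H x s') s) y
        = Real.sin (x / H) * (-Real.sin (y / H) * (1 / H)) := by
      have : (fun s => deriv (fun s' => rhoFn H x s') s)
          = fun s => Real.sin (x / H) * Real.cos (s / H) := by
        funext s; exact deriv_rho_y H hH0 x s
      rw [this]
      exact ((hasDerivAt_cos_div H hH0 y).const_mul (Real.sin (x / H))).deriv
    unfold lapRho
    rw [hx2, hy2]
    unfold rhoFn
    field_simp
    ring
  have hgrad : gradRhoSq H x y =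
      Real.sin (x / H) ^ 2 + Real.sin (y / H) ^ 2 - 2 * rhoFn H x y ^ 2 / H ^ 2 := by
    unfold gradRhoSq
    rw [deriv_rho_x H hH0, deriv_rho_y H hH0]
    have hcx : Real.cos (x / H) ^ 2 = 1 - Real.sin (x / H) ^ 2 := Real.cos_sq' _
    have hcy : Real.cos (y / H) ^ 2 = 1 - Real.sin (y / H) ^ 2 := Real.cos_sq' _
    unfold rhoFn
    rw [mul_pow, mul_pow, mul_pow, mul_pow, hcx, hcy]
    field_simp
    ring
  refine ⟨hlap, hgrad, fun hpos hle => ?_⟩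
  set a := Real.sin (x / H)
  set b := Real.sin (y / H)
  set r := rhoFn H x y / H with hr
  have hrab : rhoFn H x y = H * (a * b) := by unfold rhoFn; ring
  have hrdef : r = a * b := by rw [hr, hrab]; field_simp
  have hrpos : 0 < r := div_pos hpos hH
  have hrle' : r ≤ 1 / 2 := by
    rw [hr, div_le_iff₀ hH]; linarith
  have h1 : 2 * r * (1 - r) ≤ gradRhoSq H x y := by
    rw [hgrad, hrab, hrdef]
    have : H * (a * b) ^ 2 / H = H * (a*b)^2 / H := rfl
    have hsq : 0 ≤ (a - b) ^ 2 := sq_nonneg _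
    have h2rho : 2 * (H * (a * b)) ^ 2 / H ^ 2 = 2 * (a * b) ^ 2 := by
      field_simp
    rw [h2rho]
    nlinarith [hsq]
  have h2 : r ≤ 2 * r * (1 - r) := by nlinarith
  have hgradpos : 0 < gradRhoSq H x y := lt_of_lt_of_le (by nlinarith) h1
  have h3 : |lapRho H x y| / gradRhoSq H x y ≤ 2 / H := by
    have habs : |lapRho H x y| = 2 / H ^ 2 * rhoFn H x y := by
      rw [hlap, abs_mul, abs_of_pos hpos, abs_neg, abs_of_pos]
      positivity
    rw [habs, div_le_div_iff₀ hgradpos hH]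
    have hge : r ≤ gradRhoSq H x y := le_trans h2 h1
    rw [hr] at hge
    rw [div_le_iff₀ hH] at hge
    calc 2 / H ^ 2 * rhoFn H x y * H = 2 / H * rhoFn H x y := by field_simp
      _ ≤ 2 / H * (gradRhoSq H x y * H) := by
          apply mul_le_mul_of_nonneg_left hge; positivity
      _ = 2 * gradRhoSq H x y := by field_simp
  exact ⟨h1, h2, h3⟩

end
end
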